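/- arXiv:1702.06495 — 2 statements merged into one kernel-verified Lean document; each statement's English description precedes it below -/
import Mathlib

section
/- Let C : [0,T] ⇉ ℝ^e be a multifunction with nonempty compact convex values, continuous for the Hausdorff distance, containing a fixed ball (uniform interiority condition). Let y : [0,T] → ℝ^e be continuous of bounded variation with y(t) ∈ C(t) for all t, and suppose that for every s ≤ t and every z ∈ ⋂_{τ ∈ [s,t]} C(τ), ⟨z, y(t) - y(s)⟩ ≥ (‖y(t)‖² - ‖y(s)‖²)/2. Then y solves the sweeping process: -dDy/d|Dy|(t) ∈ N_{C(t)}(y(t)) for |Dy|-almost every t. -/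
open scoped BigOperators

noncomputable section

/-- `π` is a dissection of the interval `[s,t]`. -/
def IsDissection (s t : ℝ) (π : List ℝ) : Prop :=
  List.Chain' (· < ·) π ∧ π.head? = some s ∧ π.getLast? = some t

/-- The sum `∑ ‖x(t_{k+1}) - x(t_k)‖^p` along a dissection. -/
def varSum (p : ℝ) {E : Type*} [NormedAddCommGroup E] (x : ℝ → E) (π : List ℝ) : ℝ :=
  ((π.zip π.tail).map (fun q => ‖x q.2 - x q.1‖ ^ p)).sum

/-- The `p`-variation seminorm of `x` on `[s,t]`. -/
def pVar (p : ℝ) {E : Type*} [NormedAddCommGroup E] (x : ℝ → E) (s t : ℝ) : ℝ :=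
  sSup {v | ∃ π, IsDissection s t π ∧ v = varSum p x π ^ (1 / p)}

/-- `x` has finite `p`-variation on `[s,t]`. -/
def HasFiniteVar (p : ℝ) {E : Type*} [NormedAddCommGroup E] (x : ℝ → E) (s t : ℝ) : Prop :=
  BddAbove {v | ∃ π, IsDissection s t π ∧ v = varSum p x π ^ (1 / p)}


open MeasureTheory

/-- The normal cone of a convex set `C` at `x` (empty when `x ∉ C`). -/
def normalCone {e : ℕ} (C : Set (EuclideanSpace ℝ (Fin e)))
    (x : EuclideanSpace ℝ (Fin e)) : Set (EuclideanSpace ℝ (Fin e)) :=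
  {u | x ∈ C ∧ ∀ z ∈ C, (inner ℝ u (z - x) : ℝ) ≤ 0}

variable {E : Type*} [NormedAddCommGroup E]

lemma varSum_nonneg (p : ℝ) (x : ℝ → E) (π : List ℝ) (hp : 0 ≤ p) : 0 ≤ varSum p x π := by
  apply List.sum_nonneg
  intro a ha
  simp only [List.mem_map] at ha
  obtain ⟨q, -, rfl⟩ := ha
  positivity

lemma varSum_cons (p : ℝ) (x : ℝ → E) (a b : ℝ) (l : List ℝ) :
    varSum p x (a :: b :: l) = ‖x b - x a‖ ^ p + varSum p x (b :: l) := by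
  simp [varSum]

lemma varSum_concat (p : ℝ) (x : ℝ → E) (c : ℝ) :
    ∀ (l : List ℝ) (a : ℝ),
      varSum p x ((a :: l) ++ [c]) = varSum p x (a :: l)
        + ‖x c - x ((a :: l).getLast (by simp))‖ ^ p := by
  intro l
  induction l with
  | nil => intro a; simp [varSum]
  | cons b l ih =>
    intro a
    have h1 : ((a :: b :: l) ++ [c]) = a :: ((b :: l) ++ [c]) := by simp
    rw [h1]
    have h2 : (b :: l) ++ [c] = b :: (l ++ [c]) := by simp
    rw [h2, varSum_cons, ← h2, ih b, varSum_cons]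
    have : (a :: b :: l).getLast (by simp) = (b :: l).getLast (by simp) := by
      rw [List.getLast_cons (by simp)]
    rw [this]; ring

lemma isDissection_mem_Icc {s t : ℝ} {π : List ℝ} (h : IsDissection s t π) :
    ∀ u ∈ π, u ∈ Set.Icc s t := by
  obtain ⟨hc, hh, hl⟩ := h
  obtain ⟨l, rfl⟩ : ∃ l, π = s :: l := by
    cases π with
    | nil => simp at hh
    | cons a l => simp at hh; exact ⟨l, by rw [hh]⟩
  have hpw : (s :: l).Pairwise (· < ·) := List.isChain_iff_pairwise.1 hc
  have ht : t ∈ s :: l := by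
    have := List.getLast?_eq_getLast (l := s :: l) (by simp)
    rw [this] at hl
    have : (s :: l).getLast (by simp) = t := by simpa using hl
    rw [← this]; exact List.getLast_mem _
  intro u hu
  constructor
  · rcases List.mem_cons.1 hu with rfl | hu'
    · exact le_refl u
    · exact (List.pairwise_cons.1 hpw).1 u hu' |>.le
  · -- u ≤ t where t is the last element
    have key : ∀ (l' : List ℝ), l'.Chain' (· < ·) → ∀ t', l'.getLast? = some t' →
        ∀ u' ∈ l', u' ≤ t' := by
      intro l'
      induction l' with
      | nil => intro _ t' h'; simp at h'
      | cons a l'' ih =>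
        intro hch t' hlast u' hu'
        cases l'' with
        | nil =>
          simp at hlast hu'
          simp [hu', hlast]
        | cons b l''' =>
          have hch' : (b :: l''').Chain' (· < ·) := hch.tail
          have hab : a < b := (List.isChain_cons_cons.1 hch).1
          have hlast' : (b :: l''').getLast? = some t' := by
            rw [List.getLast?_cons_cons] at hlast; exact hlast
          rcases List.mem_cons.1 hu' with rfl | hu''
          · have : b ≤ t' := ih hch' t' hlast' b (by simp)
            linarith
          · exact ih hch' t' hlast' u' hu''
    exact key (s :: l) hc t hl u hu

/-- Only dissection of `[s,s]` is `[s]`. -/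
lemma isDissection_self {s : ℝ} {π : List ℝ} (h : IsDissection s s π) : π = [s] := by
  obtain ⟨hc, hh, hl⟩ := h
  cases π with
  | nil => simp at hh
  | cons a l =>
    simp at hh; subst hh
    cases l with
    | nil => rfl
    | cons b l' =>
      exfalso
      have hpw : (a :: b :: l').Pairwise (· < ·) := List.isChain_iff_pairwise.1 hc
      have hab : a < b := (List.pairwise_cons.1 hpw).1 b (by simp)
      have hmem : ∀ u ∈ (a :: b :: l'), u ∈ Set.Icc a a :=
        isDissection_mem_Icc ⟨hc, by simp, hl⟩
      have := hmem b (by simp)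
      simp at this
      linarith [this ▸ hab]

lemma isDissection_nonempty {s t : ℝ} {π : List ℝ} (h : IsDissection s t π) : π ≠ [] := by
  intro he; rw [he] at h; simp [IsDissection] at h

lemma extend_right (p : ℝ) (x : ℝ → E) {s t T : ℝ} {π : List ℝ}
    (h : IsDissection s t π) (htT : t < T) :
    ∃ π', IsDissection s T π' ∧ varSum p x π ≤ varSum p x π' := by
  obtain ⟨a, l, rfl⟩ : ∃ a l, π = a :: l := by
    cases π with
    | nil => exact absurd rfl (isDissection_nonempty h)
    | cons a l => exact ⟨a, l, rfl⟩
  refine ⟨(a :: l) ++ [T], ⟨?_, ?_, ?_⟩, ?_⟩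
  · refine List.isChain_append.2 ⟨h.1, List.isChain_singleton T, ?_⟩
    intro u hu v hv
    rw [h.2.2] at hu
    simp at hu hv
    rw [← hu, ← hv]; exact htT
  · simpa using h.2.1
  · rw [show a :: l ++ [T] = (a :: l) ++ [T] by simp, List.getLast?_concat]
  · rw [varSum_concat]
    have : (0:ℝ) ≤ ‖x T - x ((a :: l).getLast (by simp))‖ ^ p :=
      Real.rpow_nonneg (norm_nonneg _) p
    linarith

lemma extend_left (p : ℝ) (x : ℝ → E) {s t s₀ : ℝ} {π : List ℝ}
    (h : IsDissection s t π) (hs₀ : s₀ < s) :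
    ∃ π', IsDissection s₀ t π' ∧ varSum p x π ≤ varSum p x π' := by
  obtain ⟨l, rfl⟩ : ∃ l, π = s :: l := by
    cases π with
    | nil => exact absurd rfl (isDissection_nonempty h)
    | cons a l =>
      have := h.2.1; simp at this; exact ⟨l, by rw [this]⟩
  refine ⟨s₀ :: s :: l, ⟨List.isChain_cons_cons.2 ⟨hs₀, h.1⟩, by simp, ?_⟩, ?_⟩
  · rw [List.getLast?_cons_cons]; exact h.2.2
  · rw [varSum_cons]
    have : (0:ℝ) ≤ ‖x s - x s₀‖ ^ p := Real.rpow_nonneg (norm_nonneg _) p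
    linarith

lemma bddAbove_sub (x : ℝ → E) {T s t : ℝ} (hbv : HasFiniteVar 1 x 0 T)
    (hs : 0 ≤ s) (htT : t ≤ T) :
    HasFiniteVar 1 x s t := by
  obtain ⟨M, hM⟩ := hbv
  refine ⟨M, ?_⟩
  rintro v ⟨π, hπ, rfl⟩
  have key : ∃ π', IsDissection 0 T π' ∧ varSum 1 x π ≤ varSum 1 x π' := by
    rcases eq_or_lt_of_le hs with rfl | hs'
    · rcases eq_or_lt_of_le htT with rfl | ht'
      · exact ⟨π, hπ, le_refl _⟩
      · exact extend_right 1 x hπ ht'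
    · rcases eq_or_lt_of_le htT with rfl | ht'
      · exact extend_left 1 x hπ hs'
      · obtain ⟨π₁, hπ₁, hv₁⟩ := extend_left 1 x hπ hs'
        obtain ⟨π₂, hπ₂, hv₂⟩ := extend_right 1 x hπ₁ ht'
        exact ⟨π₂, hπ₂, le_trans hv₁ hv₂⟩
  obtain ⟨π', hπ', hle⟩ := key
  have h1 : varSum 1 x π ^ (1/(1:ℝ)) = varSum 1 x π := by
    norm_num
  have h2 : varSum 1 x π' ^ (1/(1:ℝ)) = varSum 1 x π' := by
    norm_num
  rw [h1]
  calc varSum 1 x π ≤ varSum 1 x π' := hle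
    _ = varSum 1 x π' ^ (1/(1:ℝ)) := h2.symm
    _ ≤ M := hM ⟨π', hπ', rfl⟩

lemma norm_le_pVar (x : ℝ → E) {T s t : ℝ} (hbv : HasFiniteVar 1 x 0 T)
    (hs : 0 ≤ s) (hst : s ≤ t) (htT : t ≤ T) : ‖x t - x s‖ ≤ pVar 1 x s t := by
  have hbdd := bddAbove_sub x hbv hs htT
  rcases eq_or_lt_of_le hst with rfl | hst'
  · simp only [sub_self, norm_zero]
    have h0 : (0:ℝ) ∈ {v | ∃ π, IsDissection s s π ∧ v = varSum 1 x π ^ (1/(1:ℝ))} := by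
      refine ⟨[s], ⟨List.isChain_singleton s, by simp, by simp⟩, ?_⟩
      simp [varSum]
    exact le_csSup hbdd h0
  · have hmem : ‖x t - x s‖ ∈ {v | ∃ π, IsDissection s t π ∧ v = varSum 1 x π ^ (1/(1:ℝ))} := by
      refine ⟨[s, t], ⟨List.isChain_cons_cons.2 ⟨hst', List.isChain_singleton t⟩, by simp, by simp⟩, ?_⟩
      have h1 : varSum 1 x [s, t] = ‖x t - x s‖ ^ (1:ℝ) := by simp [varSum]
      rw [h1, show (1:ℝ)/1 = 1 by norm_num, Real.rpow_one, Real.rpow_one]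
    exact le_csSup hbdd hmem

lemma pVar_eq_zero_of_const (x : ℝ → E) {s t : ℝ} (c : E)
    (hconst : ∀ u ∈ Set.Icc s t, x u = c) : pVar 1 x s t = 0 := by
  have hsub : ∀ v ∈ {v | ∃ π, IsDissection s t π ∧ v = varSum 1 x π ^ (1/(1:ℝ))}, v = 0 := by
    rintro v ⟨π, hπ, rfl⟩
    have hz : varSum 1 x π = 0 := by
      apply List.sum_eq_zero
      intro a ha
      simp only [List.mem_map] at ha
      obtain ⟨q, hq, rfl⟩ := ha
      have h1 := (List.of_mem_zip hq).1
      have h2 := List.mem_of_mem_tail (List.of_mem_zip hq).2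
      rw [hconst q.2 (isDissection_mem_Icc hπ _ h2), hconst q.1 (isDissection_mem_Icc hπ _ h1)]
      simp
    rw [hz]
    norm_num
  apply le_antisymm
  · exact Real.sSup_le (fun v hv => le_of_eq (hsub v hv)) le_rfl
  · exact Real.sSup_nonneg (fun v hv => ge_of_eq (hsub v hv))
open Metric

lemma combo_mem_of_hausdorff {e : ℕ} {C₁ C₂ : Set (EuclideanSpace ℝ (Fin e))}
    {x₀ z : EuclideanSpace ℝ (Fin e)} {r lam : ℝ}
    (hz : z ∈ C₁) (hne : C₁.Nonempty) (hcpt1 : IsCompact C₁)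
    (hne2 : C₂.Nonempty) (hcpt2 : IsCompact C₂) (hconv : Convex ℝ C₂)
    (hball : closedBall x₀ r ⊆ C₂)
    (hlam : 0 < lam) (hlam1 : lam ≤ 1) (hr : 0 < r)
    (hd : hausdorffDist C₁ C₂ < lam * r) :
    (1 - lam) • z + lam • x₀ ∈ C₂ := by
  have hedist : EMetric.hausdorffEdist C₁ C₂ ≠ ⊤ :=
    hausdorffEdist_ne_top_of_nonempty_of_bounded hne hne2 hcpt1.isBounded hcpt2.isBounded
  have h1 : infDist z C₂ ≤ hausdorffDist C₁ C₂ := infDist_le_hausdorffDist_of_mem hz hedist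
  have h2 : infDist z C₂ < lam * r := lt_of_le_of_lt h1 hd
  obtain ⟨z', hz', hzz'⟩ := (infDist_lt_iff hne2).1 h2
  set w := x₀ + ((1 - lam)/lam) • (z - z') with hw
  have hwball : w ∈ closedBall x₀ r := by
    rw [mem_closedBall, dist_eq_norm]
    have : w - x₀ = ((1 - lam)/lam) • (z - z') := by rw [hw]; abel
    rw [this, norm_smul]
    have hnn : 0 ≤ (1 - lam)/lam := div_nonneg (by linarith) hlam.le
    rw [Real.norm_eq_abs, abs_of_nonneg hnn]
    have hzn : ‖z - z'‖ < lam * r := by rwa [dist_eq_norm] at hzz'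
    calc (1 - lam)/lam * ‖z - z'‖ ≤ (1 - lam)/lam * (lam * r) := by
          apply mul_le_mul_of_nonneg_left hzn.le hnn
      _ = (1 - lam) * r := by field_simp
      _ ≤ r := by nlinarith
  have hwC : w ∈ C₂ := hball hwball
  have hcombo : (1 - lam) • z' + lam • w = (1 - lam) • z + lam • x₀ := by
    rw [hw, smul_add, smul_smul]
    have : lam * ((1 - lam)/lam) = 1 - lam := by field_simp
    rw [this, smul_sub]
    abel
  have := hconv hz' hwC (by linarith : (0:ℝ) ≤ 1 - lam) hlam.le (by ring)
  rwa [hcombo] at this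

open MeasureTheory Metric

lemma aux_main
    (e : ℕ) (T : ℝ)
    (C : ℝ → Set (EuclideanSpace ℝ (Fin e)))
    (hC : ∀ t ∈ Set.Icc (0 : ℝ) T,
      (C t).Nonempty ∧ IsCompact (C t) ∧ Convex ℝ (C t))
    (hcont : ∀ t ∈ Set.Icc (0 : ℝ) T, ∀ ε > (0 : ℝ), ∃ δ > (0 : ℝ),
      ∀ s ∈ Set.Icc (0 : ℝ) T, |s - t| < δ →
        Metric.hausdorffDist (C s) (C t) < ε)
    (x₀ : EuclideanSpace ℝ (Fin e)) (r : ℝ) (hr : 0 < r)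
    (hball : ∀ t ∈ Set.Icc (0 : ℝ) T, Metric.closedBall x₀ r ⊆ C t)
    (y : ℝ → EuclideanSpace ℝ (Fin e))
    (hy : ContinuousOn y (Set.Icc 0 T))
    (hbv : HasFiniteVar 1 y 0 T)
    (hmem : ∀ t ∈ Set.Icc (0 : ℝ) T, y t ∈ C t)
    (hineq : ∀ s t : ℝ, 0 ≤ s → s ≤ t → t ≤ T →
      ∀ z, (∀ τ ∈ Set.Icc s t, z ∈ C τ) →
        (‖y t‖ ^ 2 - ‖y s‖ ^ 2) / 2 ≤ (inner ℝ z (y t - y s) : ℝ))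
    (ν : Measure ℝ) [IsFiniteMeasure ν]
    (hν : ∀ s t : ℝ, 0 ≤ s → s ≤ t → t ≤ T →
      (ν (Set.Icc s t)).toReal = pVar 1 y s t)
    (g : ℝ → EuclideanSpace ℝ (Fin e))
    (hg : ∀ s t : ℝ, 0 ≤ s → s ≤ t → t ≤ T →
      y t - y s = ∫ u in Set.Icc s t, g u ∂ν)
    (b : ℝ) (hb : b ∈ Set.Icc (0:ℝ) T)
    (hint : IntegrableOn g (Set.Icc 0 b) ν) :
    ∀ᵐ t ∂(ν.restrict (Set.Icc 0 b)), -g t ∈ normalCone (C t) (y t) := by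
  set μ := ν.restrict (Set.Icc (0:ℝ) b) with hμdef
  have hgi : Integrable g μ := hint
  have hgl : LocallyIntegrable g μ := hgi.locallyIntegrable
  have hbesav : ∀ᵐ t ∂μ, Filter.Tendsto (fun h => ⨍ u in closedBall t h, ‖g u - g t‖ ∂μ)
      (nhdsWithin 0 (Set.Ioi 0)) (nhds 0) := by
    filter_upwards [(Besicovitch.vitaliFamily μ).ae_tendsto_average_norm_sub hgl] with x hx
    exact hx.comp (Besicovitch.tendsto_filterAt μ x)
  have hbespos : ∀ᵐ t ∂μ, ∀ᶠ h in (nhdsWithin (0:ℝ) (Set.Ioi 0)), 0 < μ (closedBall t h) := by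
    filter_upwards [(Besicovitch.vitaliFamily μ).ae_eventually_measure_pos] with x hx
    exact (Besicovitch.tendsto_filterAt μ x).eventually hx
  filter_upwards [hbesav, hbespos, ae_restrict_mem measurableSet_Icc] with t havg hpos ht
  have htT : t ∈ Set.Icc (0:ℝ) T := ⟨ht.1, ht.2.trans hb.2⟩
  refine ⟨hmem t htT, ?_⟩
  intro z hz
  -- reduce to 0 ≤ ⟨z - y t, g t⟩
  suffices K : 0 ≤ (inner ℝ (z - y t) (g t) : ℝ) by
    rw [real_inner_comm] at K
    rw [inner_neg_left]
    linarith
  -- key step with interior approximation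
  have key : ∀ lam : ℝ, 0 < lam → lam ≤ 1 →
      0 ≤ (inner ℝ ((1 - lam) • z + lam • x₀ - y t) (g t) : ℝ) := by
    intro lam hlam hlam1
    set zl := (1 - lam) • z + lam • x₀ with hzl
    obtain ⟨δ, hδ, hδprop⟩ := hcont t htT (lam * r) (by positivity)
    have hzlmem : ∀ τ ∈ Set.Icc (0:ℝ) T, |τ - t| < δ → zl ∈ C τ := by
      intro τ hτ hd
      have hCt := hC t htT
      have hCτ := hC τ hτ
      refine combo_mem_of_hausdorff (hz) hCt.1 hCt.2.1 hCτ.1 hCτ.2.1 hCτ.2.2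
        (hball τ hτ) hlam hlam1 hr ?_
      rw [hausdorffDist_comm]
      exact hδprop τ hτ hd
    -- suffices : ∀ ε > 0, -ε ≤ inner (zl - y t) (g t)
    suffices hsuf : ∀ ε : ℝ, 0 < ε → -ε ≤ (inner ℝ (zl - y t) (g t) : ℝ) by
      by_contra hneg
      push_neg at hneg
      have := hsuf ((-(inner ℝ (zl - y t) (g t) : ℝ))/2) (by linarith)
      linarith
    intro ε hε
    set Z := ‖zl - y t‖ + 1 with hZ
    have hZpos : 0 < Z := by positivity
    -- continuity of y at t within Icc 0 T
    obtain ⟨δ₂, hδ₂, hycont⟩ : ∃ δ₂ > 0, ∀ τ ∈ Set.Icc (0:ℝ) T, |τ - t| < δ₂ →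
        ‖y τ - y t‖ < ε/2 := by
      obtain ⟨δ₂, hδ₂, hd⟩ := Metric.continuousWithinAt_iff.1 (hy t htT) (ε/2) (by linarith)
      exact ⟨δ₂, hδ₂, fun τ hτ hτt => by
        have := hd hτ (by rwa [Real.dist_eq]); rwa [dist_eq_norm] at this⟩
    -- choose a good radius h
    have hIoo : Set.Ioo (0:ℝ) (min δ δ₂) ∈ nhdsWithin (0:ℝ) (Set.Ioi 0) :=
      Ioo_mem_nhdsGT_of_mem ⟨le_refl _, lt_min hδ hδ₂⟩
    have hevavg : ∀ᶠ h in nhdsWithin (0:ℝ) (Set.Ioi 0),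
        (⨍ u in closedBall t h, ‖g u - g t‖ ∂μ) < ε/(2*Z) :=
      havg.eventually_lt_const (by positivity)
    have hIooev : ∀ᶠ x in nhdsWithin (0:ℝ) (Set.Ioi 0), x ∈ Set.Ioo (0:ℝ) (min δ δ₂) :=
      Filter.eventually_mem_set.mpr hIoo
    obtain ⟨h, hh, havg', hpos'⟩ := (hIooev.and (hevavg.and hpos)).exists
    obtain ⟨hh0, hhm⟩ := hh
    have hhδ : h < δ := lt_of_lt_of_le hhm (min_le_left _ _)
    have hhδ₂ : h < δ₂ := lt_of_lt_of_le hhm (min_le_right _ _)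
    set a := max (t - h) 0 with ha
    set c := min (t + h) b with hc
    have hinter : closedBall t h ∩ Set.Icc 0 b = Set.Icc a c := by
      rw [Real.closedBall_eq_Icc, Set.Icc_inter_Icc]
    have ha0 : 0 ≤ a := le_max_right _ _
    have hat : a ≤ t := max_le (by linarith) ht.1
    have htc : t ≤ c := le_min (by linarith) ht.2
    have hcT : c ≤ T := le_trans (min_le_right _ _) hb.2
    have hac : a ≤ c := le_trans hat htc
    have hta : t - a ≤ h := by
      have : t - h ≤ a := le_max_left _ _
      linarith
    have hct : c - t ≤ h := by
      have : c ≤ t + h := min_le_left _ _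
      linarith
    have haT : a ∈ Set.Icc (0:ℝ) T := ⟨ha0, le_trans hat htT.2⟩
    have hcTm : c ∈ Set.Icc (0:ℝ) T := ⟨le_trans ha0 hac, hcT⟩
    -- measure of the ball
    have hμball : μ (closedBall t h) = ν (Set.Icc a c) := by
      rw [hμdef, Measure.restrict_apply' measurableSet_Icc, hinter]
    set m := (ν (Set.Icc a c)).toReal with hm
    have hmpos : 0 < m := by
      rw [hm]
      refine ENNReal.toReal_pos ?_ (measure_ne_top ν _)
      rw [← hμball]
      exact hpos'.ne'
    -- the variational inequality
    have hzlc : ∀ τ ∈ Set.Icc a c, zl ∈ C τ := by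
      intro τ hτ
      refine hzlmem τ ⟨le_trans ha0 hτ.1, le_trans hτ.2 hcT⟩ ?_
      rw [abs_sub_lt_iff]
      constructor
      · have := hτ.2; linarith
      · have := hτ.1; linarith
    have H := hineq a c ha0 hac hcT zl hzlc
    -- algebraic manipulation
    set D := y c - y a with hD
    have hsq : ‖y c‖^2 - ‖y a‖^2 = (inner ℝ (y c + y a) D : ℝ) := by
      rw [hD, inner_add_left, inner_sub_right, inner_sub_right, real_inner_self_eq_norm_sq,
        real_inner_self_eq_norm_sq, real_inner_comm (y a) (y c)]
      ring
    have hT12 : 0 ≤ (inner ℝ (zl - y t) D : ℝ)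
        + (inner ℝ (y t - (2:ℝ)⁻¹ • (y c + y a)) D : ℝ) := by
      have e1 : (inner ℝ (zl - y t) D : ℝ) = (inner ℝ zl D : ℝ) - (inner ℝ (y t) D : ℝ) := by
        rw [inner_sub_left]
      have e2 : (inner ℝ (y t - (2:ℝ)⁻¹ • (y c + y a)) D : ℝ)
          = (inner ℝ (y t) D : ℝ) - (2:ℝ)⁻¹ * (inner ℝ (y c + y a) D : ℝ) := by
        rw [inner_sub_left, real_inner_smul_left]
      rw [e1, e2, ← hsq]
      linarith
    -- bound T2
    have hyc : ‖y c - y t‖ < ε/2 := hycont c hcTm (by rw [abs_sub_lt_iff]; constructor <;> linarith)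
    have hya : ‖y a - y t‖ < ε/2 := hycont a haT (by rw [abs_sub_lt_iff]; constructor <;> linarith)
    have hDm : ‖D‖ ≤ m := by
      rw [hD, hm, hν a c ha0 hac hcT]
      exact norm_le_pVar y hbv ha0 hac hcT
    have hmid : ‖y t - (2:ℝ)⁻¹ • (y c + y a)‖ ≤ ε/2 := by
      have hrw : y t - (2:ℝ)⁻¹ • (y c + y a) = (2:ℝ)⁻¹ • ((y t - y c) + (y t - y a)) := by
        module
      rw [hrw, norm_smul, Real.norm_eq_abs, abs_of_pos (by norm_num : (0:ℝ) < (2:ℝ)⁻¹)]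
      have h1 : ‖(y t - y c) + (y t - y a)‖ ≤ ‖y t - y c‖ + ‖y t - y a‖ := norm_add_le _ _
      have h2 : ‖y t - y c‖ = ‖y c - y t‖ := norm_sub_rev _ _
      have h3 : ‖y t - y a‖ = ‖y a - y t‖ := norm_sub_rev _ _
      rw [h2, h3] at h1
      linarith
    have hT2 : (inner ℝ (y t - (2:ℝ)⁻¹ • (y c + y a)) D : ℝ) ≤ (ε/2) * m := by
      have habs := abs_real_inner_le_norm (y t - (2:ℝ)⁻¹ • (y c + y a)) D
      have hb2 : |(inner ℝ (y t - (2:ℝ)⁻¹ • (y c + y a)) D : ℝ)| ≤ (ε/2) * m :=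
        le_trans habs (mul_le_mul hmid hDm (norm_nonneg _) (by linarith))
      exact (abs_le.1 hb2).2
    -- rewrite D as an integral over the ball
    have hDint : D = ∫ u in closedBall t h, g u ∂μ := by
      rw [hD, hg a c ha0 hac hcT, hμdef,
        Measure.restrict_restrict measurableSet_closedBall, hinter]
    have hIg : IntegrableOn g (closedBall t h) μ := hgi.integrableOn
    have hIc : IntegrableOn (fun _ => g t) (closedBall t h) μ :=
      (integrable_const (g t)).integrableOn
    have hμm : (μ (closedBall t h)).toReal = m := by rw [hμball, hm]
    have hsplit : ∫ u in closedBall t h, g u ∂μ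
        = (∫ u in closedBall t h, (g u - g t) ∂μ) + m • g t := by
      rw [integral_sub hIg hIc, setIntegral_const, measureReal_def, hμm]
      abel
    have hintnn : (0:ℝ) ≤ ∫ u in closedBall t h, ‖g u - g t‖ ∂μ :=
      integral_nonneg (fun u => norm_nonneg _)
    have hinteq : (∫ u in closedBall t h, ‖g u - g t‖ ∂μ)
        = m * ⨍ u in closedBall t h, ‖g u - g t‖ ∂μ := by
      rw [setAverage_eq (μ := μ), measureReal_def, hμm, smul_eq_mul, ← mul_assoc,
        mul_inv_cancel₀ hmpos.ne', one_mul]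
    have hnormint : ‖∫ u in closedBall t h, (g u - g t) ∂μ‖ ≤ m * (ε/(2*Z)) := by
      calc ‖∫ u in closedBall t h, (g u - g t) ∂μ‖
          ≤ ∫ u in closedBall t h, ‖g u - g t‖ ∂μ := norm_integral_le_integral_norm _
        _ = m * ⨍ u in closedBall t h, ‖g u - g t‖ ∂μ := hinteq
        _ ≤ m * (ε/(2*Z)) := mul_le_mul_of_nonneg_left havg'.le hmpos.le
    have e4 : (inner ℝ (zl - y t) D : ℝ)
        = (inner ℝ (zl - y t) (∫ u in closedBall t h, (g u - g t) ∂μ) : ℝ)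
          + m * (inner ℝ (zl - y t) (g t) : ℝ) := by
      rw [hDint, hsplit, inner_add_right, real_inner_smul_right]
    have herr : |(inner ℝ (zl - y t) (∫ u in closedBall t h, (g u - g t) ∂μ) : ℝ)|
        ≤ m * (ε/2) := by
      have h5 := abs_real_inner_le_norm (zl - y t) (∫ u in closedBall t h, (g u - g t) ∂μ)
      have h6 : ‖zl - y t‖ ≤ Z := by rw [hZ]; linarith
      have h7 : ‖zl - y t‖ * ‖∫ u in closedBall t h, (g u - g t) ∂μ‖ ≤ Z * (m * (ε/(2*Z))) :=
        mul_le_mul h6 hnormint (norm_nonneg _) (by linarith)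
      have h8 : Z * (m * (ε/(2*Z))) = m * (ε/2) := by field_simp
      rw [h8] at h7
      exact le_trans h5 h7
    have herr' := (abs_le.1 herr).2
    -- combine
    have hfinal : 0 ≤ m * (inner ℝ (zl - y t) (g t) : ℝ) + m * ε := by
      have := hT12
      rw [e4] at this
      linarith
    have : m * (-ε) ≤ m * (inner ℝ (zl - y t) (g t) : ℝ) := by linarith [hfinal]
    have := (mul_le_mul_iff_right₀ hmpos).1 this
    linarith
  -- deduce the limit as lam → 0
  set A := (inner ℝ (z - y t) (g t) : ℝ) with hA
  set B := (inner ℝ (x₀ - z) (g t) : ℝ) with hB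
  have hAB : ∀ lam : ℝ, 0 < lam → lam ≤ 1 → 0 ≤ A + lam * B := by
    intro lam h1 h2
    have hk := key lam h1 h2
    have e : ((1 - lam) • z + lam • x₀ - y t : EuclideanSpace ℝ (Fin e))
        = (z - y t) + lam • (x₀ - z) := by module
    rw [e, inner_add_left, real_inner_smul_left] at hk
    exact hk
  by_contra hAneg
  push_neg at hAneg
  rw [hA] at *
  set lam := min 1 (-A / (2 * (|B| + 1))) with hlamdef
  have hApos : 0 < -A := by linarith
  have hlampos : 0 < lam := lt_min one_pos (by positivity)
  have hlam1 : lam ≤ 1 := min_le_left _ _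
  have hq := hAB lam hlampos hlam1
  have hlamle : lam ≤ -A / (2*(|B|+1)) := min_le_right _ _
  have s1 : lam * B ≤ lam * |B| := mul_le_mul_of_nonneg_left (le_abs_self B) hlampos.le
  have s2 : lam * |B| ≤ (-A / (2*(|B|+1))) * |B| :=
    mul_le_mul_of_nonneg_right hlamle (abs_nonneg B)
  have s3 : (-A / (2*(|B|+1))) * |B| ≤ -A/2 := by
    rw [div_mul_eq_mul_div, div_le_div_iff₀ (by positivity) (by norm_num)]
    nlinarith [abs_nonneg B]
  linarith

theorem solves_sweeping_process_of_variational_inequality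
    (e : ℕ) (T : ℝ) (hT : 0 < T)
    (C : ℝ → Set (EuclideanSpace ℝ (Fin e)))
    (hC : ∀ t ∈ Set.Icc (0 : ℝ) T,
      (C t).Nonempty ∧ IsCompact (C t) ∧ Convex ℝ (C t))
    (hcont : ∀ t ∈ Set.Icc (0 : ℝ) T, ∀ ε > (0 : ℝ), ∃ δ > (0 : ℝ),
      ∀ s ∈ Set.Icc (0 : ℝ) T, |s - t| < δ →
        Metric.hausdorffDist (C s) (C t) < ε)
    (x₀ : EuclideanSpace ℝ (Fin e)) (r : ℝ) (hr : 0 < r)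
    (hball : ∀ t ∈ Set.Icc (0 : ℝ) T, Metric.closedBall x₀ r ⊆ C t)
    (y : ℝ → EuclideanSpace ℝ (Fin e))
    (hy : ContinuousOn y (Set.Icc 0 T))
    (hbv : HasFiniteVar 1 y 0 T)
    (hmem : ∀ t ∈ Set.Icc (0 : ℝ) T, y t ∈ C t)
    (hineq : ∀ s t : ℝ, 0 ≤ s → s ≤ t → t ≤ T →
      ∀ z, (∀ τ ∈ Set.Icc s t, z ∈ C τ) →
        (‖y t‖ ^ 2 - ‖y s‖ ^ 2) / 2 ≤ (inner ℝ z (y t - y s) : ℝ))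
    -- `ν` is the variation measure `|Dy|` of `y` :
    (ν : Measure ℝ) [IsFiniteMeasure ν]
    (hν : ∀ s t : ℝ, 0 ≤ s → s ≤ t → t ≤ T →
      (ν (Set.Icc s t)).toReal = pVar 1 y s t)
    -- `g` is the Radon–Nikodym density `dDy/d|Dy|` of the differential measure of `y` :
    (g : ℝ → EuclideanSpace ℝ (Fin e))
    (hg : ∀ s t : ℝ, 0 ≤ s → s ≤ t → t ≤ T →
      y t - y s = ∫ u in Set.Icc s t, g u ∂ν) :
    ∀ᵐ t ∂(ν.restrict (Set.Icc 0 T)), -g t ∈ normalCone (C t) (y t) := by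
  -- the set of "good" right endpoints
  set S : Set ℝ := {s | s ∈ Set.Icc (0:ℝ) T ∧ IntegrableOn g (Set.Icc 0 s) ν} with hS
  have h0S : (0:ℝ) ∈ S := by
    refine ⟨⟨le_refl 0, hT.le⟩, ?_⟩
    rw [Set.Icc_self]
    have hae : g =ᵐ[ν.restrict {(0:ℝ)}] fun _ => g 0 := by
      filter_upwards [ae_restrict_mem (measurableSet_singleton (0:ℝ))] with u hu
      simp only [Set.mem_singleton_iff] at hu
      rw [hu]
    exact (integrable_const (g 0)).congr hae.symm
  have hSne : S.Nonempty := ⟨0, h0S⟩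
  have hSbdd : BddAbove S := ⟨T, fun s hs => hs.1.2⟩
  set t₀ := sSup S with ht₀
  have ht₀0 : 0 ≤ t₀ := le_csSup hSbdd h0S
  have ht₀T : t₀ ≤ T := csSup_le hSne (fun s hs => hs.1.2)
  -- y is constant past t₀
  have hconst : ∀ s, t₀ < s → s ≤ T → y s = y 0 := by
    intro s hs hsT
    have hns : s ∉ S := fun hmem' => absurd (le_csSup hSbdd hmem') (not_le.2 hs)
    have hni : ¬ IntegrableOn g (Set.Icc 0 s) ν := fun hi =>
      hns ⟨⟨le_trans ht₀0 hs.le, hsT⟩, hi⟩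
    have := hg 0 s (le_refl 0) (le_trans ht₀0 hs.le) hsT
    rw [integral_undef hni] at this
    exact sub_eq_zero.1 this
  -- the tail has measure zero
  have htail : ν (Set.Ioc t₀ T) = 0 := by
    have hcover : Set.Ioc t₀ T ⊆ ⋃ n : ℕ, Set.Icc (t₀ + 1/(n+1)) T := by
      intro u hu
      obtain ⟨n, hn⟩ := exists_nat_one_div_lt (show (0:ℝ) < u - t₀ by linarith [hu.1])
      exact Set.mem_iUnion.2 ⟨n, ⟨by push_cast at hn ⊢; linarith, hu.2⟩⟩
    refine measure_mono_null hcover (measure_iUnion_null fun n => ?_)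
    have hspos : 0 < 1/((n:ℝ)+1) := by positivity
    rcases le_or_gt (t₀ + 1/((n:ℝ)+1)) T with hsT | hsT
    · have h0s : 0 ≤ t₀ + 1/((n:ℝ)+1) := by linarith
      have hp0 : pVar 1 y (t₀ + 1/((n:ℝ)+1)) T = 0 := by
        apply pVar_eq_zero_of_const y (y 0)
        intro u hu
        have hu1 : t₀ + 1/((n:ℝ)+1) ≤ u := hu.1
        exact hconst u (by linarith) hu.2
      have hh := hν (t₀ + 1/((n:ℝ)+1)) T h0s hsT le_rfl
      rw [hp0] at hh
      exact (ENNReal.toReal_eq_zero_iff _).1 hh |>.resolve_right (measure_ne_top ν _)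
    · rw [Set.Icc_eq_empty (not_le.2 hsT)]
      exact measure_empty
  -- the point t₀ has measure zero
  have hsing : ν {t₀} = 0 := by
    have h1 : pVar 1 y t₀ t₀ = 0 := by
      apply pVar_eq_zero_of_const y (y t₀)
      intro u hu
      rw [Set.Icc_self, Set.mem_singleton_iff] at hu
      rw [hu]
    have := hν t₀ t₀ ht₀0 le_rfl ht₀T
    rw [h1, Set.Icc_self] at this
    exact (ENNReal.toReal_eq_zero_iff _).1 this |>.resolve_right (measure_ne_top ν _)
  -- approximating sequence from below
  have hbn : ∀ n : ℕ, ∃ s ∈ S, t₀ - 1/((n:ℝ)+1) < s := by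
    intro n
    apply exists_lt_of_lt_csSup hSne
    have : (0:ℝ) < 1/((n:ℝ)+1) := by positivity
    linarith
  choose bn hbnS hbnlt using hbn
  -- null sets from the main lemma
  have hnull : ∀ n : ℕ, ν ({u | ¬ (-g u ∈ normalCone (C u) (y u))} ∩ Set.Icc 0 (bn n)) = 0 := by
    intro n
    have := aux_main e T C hC hcont x₀ r hr hball y hy hbv hmem hineq ν hν g hg
      (bn n) (hbnS n).1 (hbnS n).2
    rw [ae_iff] at this
    rwa [Measure.restrict_apply' measurableSet_Icc] at this
  -- assemble
  rw [ae_iff, Measure.restrict_apply' measurableSet_Icc]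
  have hcover : {u | ¬ (-g u ∈ normalCone (C u) (y u))} ∩ Set.Icc 0 T ⊆
      (⋃ n : ℕ, {u | ¬ (-g u ∈ normalCone (C u) (y u))} ∩ Set.Icc 0 (bn n))
        ∪ (Set.Ioc t₀ T ∪ {t₀}) := by
    rintro u ⟨hu, huT⟩
    rcases lt_trichotomy u t₀ with hlt | heq | hgt
    · obtain ⟨n, hn⟩ := exists_nat_one_div_lt (show (0:ℝ) < t₀ - u by linarith)
      left
      refine Set.mem_iUnion.2 ⟨n, hu, huT.1, ?_⟩
      have := hbnlt n
      push_cast at hn this ⊢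
      linarith
    · right; right; exact heq
    · right; left; exact ⟨hgt, huT.2⟩
  refine le_antisymm ?_ zero_le
  calc ν ({u | ¬ (-g u ∈ normalCone (C u) (y u))} ∩ Set.Icc 0 T)
      ≤ ν ((⋃ n : ℕ, {u | ¬ (-g u ∈ normalCone (C u) (y u))} ∩ Set.Icc 0 (bn n))
        ∪ (Set.Ioc t₀ T ∪ {t₀})) := measure_mono hcover
    _ = 0 := by
        refine measure_union_null (measure_iUnion_null hnull) (measure_union_null htail hsing)
end
end

section
/- Let q, r ∈ [1,∞) with 1/q + 1/r > 1, let z : [0,T] → ℝ^d be continuous of finite q-variation, let y : [0,T] → M_{e,d}(ℝ) be continuous of finite r-variation, and let (y_n) be continuous functions of finite r-variation with ‖y_n - y‖_∞ → 0 and sup_n ‖y_n‖_{r-var,[0,T]} < ∞. Then the Young integrals satisfy sup_{t ∈ [0,T]} ‖∫_0^t y_n dz - ∫_0^t y dz‖ → 0. -/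
open scoped BigOperators

noncomputable section

open Filter

/-- The Riemann sum of `y` against `z` along a dissection `π`. -/
def riemannSum {d e : ℕ}
    (y : ℝ → (EuclideanSpace ℝ (Fin d) →L[ℝ] EuclideanSpace ℝ (Fin e)))
    (z : ℝ → EuclideanSpace ℝ (Fin d)) (π : List ℝ) : EuclideanSpace ℝ (Fin e) :=
  ((π.zip π.tail).map (fun q => y q.1 (z q.2 - z q.1))).sum

/-- The mesh of a dissection. -/
def mesh (π : List ℝ) : ℝ :=
  ((π.zip π.tail).map (fun q => q.2 - q.1)).foldr max 0

/-- `I` is the Young integral `∫_0^t y dz`, i.e. the limit of Riemann sums along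
dissections of `[0,t]` with mesh tending to `0`. -/
def IsYoungIntegral {d e : ℕ}
    (y : ℝ → (EuclideanSpace ℝ (Fin d) →L[ℝ] EuclideanSpace ℝ (Fin e)))
    (z : ℝ → EuclideanSpace ℝ (Fin d)) (t : ℝ)
    (I : EuclideanSpace ℝ (Fin e)) : Prop :=
  ∀ ε > (0 : ℝ), ∃ δ > (0 : ℝ), ∀ π : List ℝ,
    IsDissection 0 t π → mesh π < δ → ‖riemannSum y z π - I‖ < ε

/-! ### Auxiliary lemmas -/

lemma pairSum {E : Type*} [AddCommMonoid E] (f : ℝ → ℝ → E) :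
    ∀ l : List ℝ, ((l.zip l.tail).map (fun q => f q.1 q.2)).sum
      = ∑ i ∈ Finset.range (l.length - 1), f (l.getD i 0) (l.getD (i+1) 0) := by
  intro l
  induction l with
  | nil => simp
  | cons a l ih =>
    cases l with
    | nil => simp
    | cons b m =>
      have : ((a :: b :: m).zip (a :: b :: m).tail) = (a, b) :: ((b :: m).zip (b :: m).tail) := by
        simp
      rw [this]
      simp only [List.map_cons, List.sum_cons, ih]
      have hlen : (a :: b :: m).length - 1 = ((b :: m).length - 1) + 1 := by
        simp
      rw [hlen, Finset.sum_range_succ', add_comm]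
      congr 1

lemma varSum_eq (p : ℝ) {E : Type*} [NormedAddCommGroup E] (x : ℝ → E) (π : List ℝ) :
    varSum p x π = ∑ i ∈ Finset.range (π.length - 1),
      ‖x (π.getD (i+1) 0) - x (π.getD i 0)‖ ^ p := by
  exact pairSum (fun u v => ‖x v - x u‖ ^ p) π

lemma riemannSum_eq {d e : ℕ}
    (y : ℝ → (EuclideanSpace ℝ (Fin d) →L[ℝ] EuclideanSpace ℝ (Fin e)))
    (z : ℝ → EuclideanSpace ℝ (Fin d)) (π : List ℝ) :
    riemannSum y z π = ∑ i ∈ Finset.range (π.length - 1),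
      y (π.getD i 0) (z (π.getD (i+1) 0) - z (π.getD i 0)) := by
  exact pairSum (fun u v => y u (z v - z u)) π

namespace IsDissection

variable {s t : ℝ} {π : List ℝ}

lemma length_pos (h : IsDissection s t π) : 0 < π.length := by
  rcases h with ⟨-, h2, -⟩
  cases π with
  | nil => simp at h2
  | cons a l => simp

lemma getD_zero (h : IsDissection s t π) : π.getD 0 0 = s := by
  rcases h with ⟨-, h2, -⟩
  cases π with
  | nil => simp at h2
  | cons a l => simp at h2 ⊢; exact h2

lemma getD_last (h : IsDissection s t π) : π.getD (π.length - 1) 0 = t := by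
  rcases h with ⟨-, -, h3⟩
  have hne : π ≠ [] := by rintro rfl; simp at h3
  rw [List.getLast?_eq_getLast hne] at h3
  have := List.getLast_eq_getElem (l := π) hne
  rw [List.getD_eq_getElem _ _ (by have := List.length_pos_iff.2 hne; omega), ← this]
  exact Option.some_injective _ h3

lemma mono (h : IsDissection s t π) :
    ∀ i j : ℕ, i < j → j < π.length → π.getD i 0 < π.getD j 0 := by
  intro i j hij hj
  have hp : List.Pairwise (· < ·) π := List.isChain_iff_pairwise.1 h.1
  rw [List.getD_eq_getElem _ _ (lt_trans hij hj), List.getD_eq_getElem _ _ hj]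
  exact List.pairwise_iff_get.1 hp ⟨i, lt_trans hij hj⟩ ⟨j, hj⟩ hij

lemma mem_bounds (h : IsDissection s t π) {i : ℕ} (hi : i < π.length) :
    s ≤ π.getD i 0 ∧ π.getD i 0 ≤ t := by
  constructor
  · rcases Nat.eq_zero_or_pos i with rfl | hpos
    · rw [h.getD_zero]
    · rw [← h.getD_zero]; exact le_of_lt (h.mono 0 i hpos hi)
  · rcases eq_or_lt_of_le (Nat.le_sub_one_of_lt hi) with he | hlt
    · rw [← h.getD_last, he]
    · rw [← h.getD_last]
      exact le_of_lt (h.mono i _ hlt (by omega))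

lemma s_le_t (h : IsDissection s t π) : s ≤ t := by
  have := h.mem_bounds (i := 0) h.length_pos
  rw [h.getD_zero] at this
  exact this.2

lemma two_le_length (h : IsDissection s t π) (hst : s < t) : 2 ≤ π.length := by
  by_contra hc
  have h1 : π.length = 1 := by have := h.length_pos; omega
  have h0 := h.getD_zero
  have hl := h.getD_last
  rw [h1] at hl
  simp only [Nat.sub_self] at hl
  rw [h0] at hl
  exact absurd hl (ne_of_lt hst)

lemma eraseIdx (h : IsDissection s t π) {i : ℕ}
    (h1 : 1 ≤ i) (h2 : i < π.length - 1) : IsDissection s t (π.eraseIdx i) := by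
  obtain ⟨hc, hh, hl⟩ := h
  have hlen : (π.eraseIdx i).length = π.length - 1 := by
    rw [List.length_eraseIdx]
    simp only [if_pos (by omega : i < π.length)]
  refine ⟨?_, ?_, ?_⟩
  · exact List.isChain_iff_pairwise.2
      ((List.isChain_iff_pairwise.1 hc).sublist (List.eraseIdx_sublist π i))
  · have hne : π.eraseIdx i ≠ [] := by
      intro he; rw [he] at hlen; simp at hlen; omega
    have hne' : π ≠ [] := by rintro rfl; simp at hh
    rw [List.head?_eq_head hne]
    rw [List.head?_eq_head hne'] at hh
    have : (π.eraseIdx i).head (hne) = π.head hne' := by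
      rw [List.head_eq_getElem, List.head_eq_getElem, List.getElem_eraseIdx]
      simp [Nat.lt_of_lt_of_le Nat.zero_lt_one h1]
    rw [this]; exact hh
  · have hne : π.eraseIdx i ≠ [] := by
      intro he; rw [he] at hlen; simp at hlen; omega
    have hne' : π ≠ [] := by rintro rfl; simp at hh
    rw [List.getLast?_eq_getLast hne]
    rw [List.getLast?_eq_getLast hne'] at hl
    have : (π.eraseIdx i).getLast hne = π.getLast hne' := by
      rw [List.getLast_eq_getElem, List.getLast_eq_getElem, List.getElem_eraseIdx]
      have hni : ¬ ((π.eraseIdx i).length - 1 < i) := by omega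
      rw [dif_neg hni]
      congr 1
      omega
    rw [this]; exact hl

lemma concat (h : IsDissection s t π) {T : ℝ} (htT : t < T) :
    IsDissection s T (π ++ [T]) := by
  have hne : π ≠ [] := by
    intro he; subst he; exact absurd h.2.1 (by simp)
  refine ⟨?_, ?_, ?_⟩
  · simp only [List.Chain']
    rw [List.isChain_iff_pairwise, List.pairwise_append]
    refine ⟨List.isChain_iff_pairwise.1 h.1, by simp, ?_⟩
    intro a ha b hb
    rw [List.mem_singleton] at hb
    subst hb
    obtain ⟨i, hi, rfl⟩ := List.mem_iff_getElem.1 ha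
    rw [← List.getD_eq_getElem _ 0 hi]
    exact lt_of_le_of_lt (h.mem_bounds hi).2 htT
  · rw [List.head?_append]
    rw [h.2.1]
    rfl
  · exact List.getLast?_concat

end IsDissection
section chunk3

lemma getD_concat_lt (π : List ℝ) (T : ℝ) {j : ℕ} (hj : j < π.length) :
    (π ++ [T]).getD j 0 = π.getD j 0 := by
  rw [List.getD_eq_getElem _ _ (by simp; omega), List.getD_eq_getElem _ _ hj,
    List.getElem_append_left hj]

lemma getD_concat_last (π : List ℝ) (T : ℝ) :
    (π ++ [T]).getD π.length 0 = T := by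
  rw [List.getD_eq_getElem _ _ (by simp)]
  simp

lemma varSum_le_concat (p : ℝ) {E : Type*} [NormedAddCommGroup E] (x : ℝ → E)
    (π : List ℝ) (hne : π ≠ []) (T : ℝ) :
    varSum p x π ≤ varSum p x (π ++ [T]) := by
  rw [varSum_eq, varSum_eq]
  have hL : 0 < π.length := List.length_pos_iff.2 hne
  have hlen : (π ++ [T]).length - 1 = (π.length - 1) + 1 := by simp; omega
  rw [hlen, Finset.sum_range_succ]
  have hsame : ∑ i ∈ Finset.range (π.length - 1),
      ‖x ((π ++ [T]).getD (i+1) 0) - x ((π ++ [T]).getD i 0)‖ ^ p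
      = ∑ i ∈ Finset.range (π.length - 1), ‖x (π.getD (i+1) 0) - x (π.getD i 0)‖ ^ p := by
    refine Finset.sum_congr rfl ?_
    intro i hi
    rw [Finset.mem_range] at hi
    rw [getD_concat_lt _ _ (by omega), getD_concat_lt _ _ (by omega)]
  rw [hsame]
  have : (0:ℝ) ≤ ‖x ((π ++ [T]).getD (π.length - 1 + 1) 0) - x ((π ++ [T]).getD (π.length - 1) 0)‖ ^ p :=
    Real.rpow_nonneg (norm_nonneg _) p
  linarith

/-- every dissection of `[0,t]` with `t ∈ [0,T]` has `varSum ≤ (pVar over [0,T])^p`,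
assuming finite variation. -/
lemma varSum_le_pVar (p : ℝ) (hp : 1 ≤ p) {E : Type*} [NormedAddCommGroup E] (x : ℝ → E)
    {T t : ℝ} (ht : t ≤ T) (hfin : HasFiniteVar p x 0 T)
    {σ : List ℝ} (hσ : IsDissection 0 t σ) :
    varSum p x σ ≤ pVar p x 0 T ^ p := by
  have hp0 : p ≠ 0 := by positivity
  have hv0 : 0 ≤ varSum p x σ := by
    rw [varSum_eq]
    exact Finset.sum_nonneg fun i _ => Real.rpow_nonneg (norm_nonneg _) p
  rcases eq_or_lt_of_le ht with rfl | hlt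
  · have hmem : varSum p x σ ^ (1/p) ∈
        {v | ∃ π, IsDissection 0 t π ∧ v = varSum p x π ^ (1 / p)} := ⟨σ, hσ, rfl⟩
    have h1 : varSum p x σ ^ (1/p) ≤ pVar p x 0 t := le_csSup hfin hmem
    calc varSum p x σ = (varSum p x σ ^ (1/p)) ^ p := by
          rw [← Real.rpow_mul hv0, one_div, inv_mul_cancel₀ hp0, Real.rpow_one]
      _ ≤ pVar p x 0 t ^ p := by
          apply Real.rpow_le_rpow (Real.rpow_nonneg hv0 _) h1 (by positivity)
  · have hσ' := hσ.concat hlt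
    have hne : σ ≠ [] := by
      intro he; subst he; exact absurd hσ.2.1 (by simp)
    have hle := varSum_le_concat p x σ hne T
    have hv0' : 0 ≤ varSum p x (σ ++ [T]) := le_trans hv0 hle
    have hmem : varSum p x (σ ++ [T]) ^ (1/p) ∈
        {v | ∃ π, IsDissection 0 T π ∧ v = varSum p x π ^ (1 / p)} := ⟨_, hσ', rfl⟩
    have h1 : varSum p x (σ ++ [T]) ^ (1/p) ≤ pVar p x 0 T := le_csSup hfin hmem
    calc varSum p x σ ≤ varSum p x (σ ++ [T]) := hle
      _ = (varSum p x (σ ++ [T]) ^ (1/p)) ^ p := by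
          rw [← Real.rpow_mul hv0', one_div, inv_mul_cancel₀ hp0, Real.rpow_one]
      _ ≤ pVar p x 0 T ^ p :=
          Real.rpow_le_rpow (Real.rpow_nonneg hv0' _) h1 (by positivity)

end chunk3
section chunk4

lemma sum_split3 {M : Type*} [AddCommMonoid M] (f : ℕ → M) (a b : ℕ)
    (h1 : 1 ≤ a) (h2 : a - 1 < b) :
    ∑ j ∈ Finset.range b, f j
      = (∑ j ∈ Finset.Ico 0 (a-1), f j) + f (a-1) + ∑ j ∈ Finset.Ico a b, f j := by
  rw [Finset.range_eq_Ico,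
    ← Finset.sum_Ico_consecutive f (by omega : 0 ≤ a - 1) (by omega : a - 1 ≤ b),
    Finset.sum_eq_sum_Ico_succ_bot h2 f]
  have : a - 1 + 1 = a := by omega
  rw [this, add_assoc]

variable {d e : ℕ}

lemma riemannSum_eraseIdx
    (y : ℝ → (EuclideanSpace ℝ (Fin d) →L[ℝ] EuclideanSpace ℝ (Fin e)))
    (z : ℝ → EuclideanSpace ℝ (Fin d)) (π : List ℝ) {i : ℕ}
    (h1 : 1 ≤ i) (h2 : i < π.length - 1) :
    riemannSum y z π - riemannSum y z (π.eraseIdx i)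
      = (y (π.getD i 0) - y (π.getD (i-1) 0)) (z (π.getD (i+1) 0) - z (π.getD i 0)) := by
  set N := π.length with hN
  have hN3 : 3 ≤ N := by omega
  set F : ℕ → EuclideanSpace ℝ (Fin e) :=
    fun j => y (π.getD j 0) (z (π.getD (j+1) 0) - z (π.getD j 0)) with hF
  set G : ℕ → EuclideanSpace ℝ (Fin e) :=
    fun j => y ((π.eraseIdx i).getD j 0)
      (z ((π.eraseIdx i).getD (j+1) 0) - z ((π.eraseIdx i).getD j 0)) with hG
  have hlen' : (π.eraseIdx i).length = N - 1 := by
    rw [List.length_eraseIdx]; simp only [if_pos (by omega : i < π.length)]; rfl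
  have hget : ∀ j : ℕ, j < N - 1 → (π.eraseIdx i).getD j 0
      = if j < i then π.getD j 0 else π.getD (j+1) 0 := by
    intro j hj
    rw [List.getD_eq_getElem _ _ (by omega), List.getElem_eraseIdx]
    split_ifs with hji
    all_goals exact (List.getD_eq_getElem _ _ (by omega)).symm
  have e1 : riemannSum y z π
      = (∑ j ∈ Finset.Ico 0 (i-1), F j) + F (i-1)
        + (F i + ∑ j ∈ Finset.Ico (i+1) (N-1), F j) := by
    rw [riemannSum_eq]
    rw [show ∑ j ∈ Finset.range (π.length - 1),
        y (π.getD j 0) (z (π.getD (j+1) 0) - z (π.getD j 0)) = ∑ j ∈ Finset.range (N-1), F j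
      from rfl]
    rw [sum_split3 F i (N-1) h1 (by omega)]
    rw [Finset.sum_eq_sum_Ico_succ_bot (by omega : i < N - 1) F, add_assoc]
  have e2 : riemannSum y z (π.eraseIdx i)
      = (∑ j ∈ Finset.Ico 0 (i-1), F j)
        + y (π.getD (i-1) 0) (z (π.getD (i+1) 0) - z (π.getD (i-1) 0))
        + ∑ j ∈ Finset.Ico (i+1) (N-1), F j := by
    rw [riemannSum_eq]
    rw [show ∑ j ∈ Finset.range ((π.eraseIdx i).length - 1),
        y ((π.eraseIdx i).getD j 0)
          (z ((π.eraseIdx i).getD (j+1) 0) - z ((π.eraseIdx i).getD j 0))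
        = ∑ j ∈ Finset.range (N-1-1), G j from by rw [hlen']]
    rw [sum_split3 G i (N-1-1) h1 (by omega)]
    congr 1
    · congr 1
      · refine Finset.sum_congr rfl ?_
        intro j hj
        rw [Finset.mem_Ico] at hj
        simp only [hG, hF]
        rw [hget j (by omega), hget (j+1) (by omega), if_pos (by omega), if_pos (by omega)]
      · simp only [hG]
        rw [hget (i-1) (by omega), hget (i-1+1) (by omega), if_pos (by omega),
          if_neg (by omega)]
        have h' : i - 1 + 1 = i := by omega
        rw [h']
    · have : ∑ j ∈ Finset.Ico i (N-1-1), G j = ∑ j ∈ Finset.Ico i (N-1-1), F (1 + j) := by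
        refine Finset.sum_congr rfl ?_
        intro j hj
        rw [Finset.mem_Ico] at hj
        simp only [hG, hF]
        rw [hget j (by omega), hget (j+1) (by omega), if_neg (by omega), if_neg (by omega)]
        have h' : 1 + j = j + 1 := by omega
        rw [h']
      rw [this, Finset.sum_Ico_add F i (N-1-1) 1]
      have hEq : N - 1 - 1 + 1 = N - 1 := by omega
      rw [hEq]
  rw [e1, e2]
  have hexp : F (i-1) + F i
      - y (π.getD (i-1) 0) (z (π.getD (i+1) 0) - z (π.getD (i-1) 0))
      = (y (π.getD i 0) - y (π.getD (i-1) 0)) (z (π.getD (i+1) 0) - z (π.getD i 0)) := by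
    simp only [hF]
    have h' : i - 1 + 1 = i := by omega
    rw [h']
    rw [ContinuousLinearMap.sub_apply]
    simp only [map_sub]
    abel
  rw [← hexp]
  abel

end chunk4
section chunk5

lemma div_rpow_aux (a K p θ : ℝ) (ha : 0 ≤ a) (hK : 0 < K) (hp : 0 < p) :
    (a / K ^ (1/p)) ^ θ = (a ^ p / K) ^ (θ/p) := by
  rw [Real.div_rpow ha (Real.rpow_pos_of_pos hK _).le,
      Real.div_rpow (Real.rpow_nonneg ha p) hK.le,
      ← Real.rpow_mul ha, ← Real.rpow_mul hK.le,
      show p * (θ/p) = θ from by field_simp,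
      show (1/p) * θ = θ/p from by ring]

variable {d e : ℕ}

lemma riemannSum_sub
    (y1 y2 : ℝ → (EuclideanSpace ℝ (Fin d) →L[ℝ] EuclideanSpace ℝ (Fin e)))
    (z : ℝ → EuclideanSpace ℝ (Fin d)) (π : List ℝ) :
    riemannSum (fun s => y1 s - y2 s) z π = riemannSum y1 z π - riemannSum y2 z π := by
  simp only [riemannSum_eq, ← Finset.sum_sub_distrib, ContinuousLinearMap.sub_apply]

lemma riemannSum_base
    (g : ℝ → (EuclideanSpace ℝ (Fin d) →L[ℝ] EuclideanSpace ℝ (Fin e)))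
    (z : ℝ → EuclideanSpace ℝ (Fin d)) {t : ℝ} {π : List ℝ}
    (h : IsDissection 0 t π) (hlen : π.length ≤ 2) :
    riemannSum g z π = g 0 (z t - z 0) := by
  have h1 := h.length_pos
  interval_cases hL : π.length
  · -- length 1
    have h0 := h.getD_zero
    have hl := h.getD_last
    rw [hL] at hl
    simp only [Nat.sub_self] at hl
    rw [h0] at hl
    rw [riemannSum_eq, hL]
    simp [← hl]
  · -- length 2
    rw [riemannSum_eq, hL]
    have h0 := h.getD_zero
    have hl := h.getD_last
    rw [hL] at hl
    have h21 : (2:ℕ) - 1 = 1 := rfl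
    rw [h21] at hl
    rw [show (2:ℕ) - 1 = 1 from rfl, Finset.sum_range_one, h0, hl]

lemma young_discrete (p1 p2 : ℝ) (hp1 : 0 < p1) (hp2 : 0 < p2)
    (hs : 1 < 1/p1 + 1/p2)
    (g : ℝ → (EuclideanSpace ℝ (Fin d) →L[ℝ] EuclideanSpace ℝ (Fin e)))
    (z : ℝ → EuclideanSpace ℝ (Fin d)) (t : ℝ) (K1 K2 : ℝ) (hK1 : 0 < K1) (hK2 : 0 < K2)
    (hgv : ∀ σ, IsDissection 0 t σ → varSum p1 g σ ≤ K1)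
    (hzv : ∀ σ, IsDissection 0 t σ → varSum p2 z σ ≤ K2) :
    ∀ N (π : List ℝ), π.length = N → IsDissection 0 t π →
      ‖riemannSum g z π - g 0 (z t - z 0)‖
        ≤ (∑ j ∈ Finset.range (N-2), ((j:ℝ)+1) ^ (-(1/p1+1/p2)))
          * (K1 ^ (1/p1) * K2 ^ (1/p2)) := by
  set s : ℝ := 1/p1 + 1/p2 with hsdef
  set θ : ℝ := 1/s with hθdef
  have hs0 : 0 < s := by positivity
  have hθ0 : 0 < θ := by positivity
  have hθ1 : θ * s = 1 := by
    rw [hθdef, one_div, inv_mul_cancel₀ hs0.ne']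
  have hw : θ/p1 + θ/p2 = 1 := by
    have h' : θ/p1 + θ/p2 = θ * s := by rw [hsdef]; ring
    rw [h', hθ1]
  set D : ℝ := K1 ^ (1/p1) * K2 ^ (1/p2) with hDdef
  have hD0 : 0 < D := by positivity
  intro N
  induction N using Nat.strong_induction_on with
  | _ N IH =>
    intro π hπlen hπ
    by_cases hN2 : N ≤ 2
    · rw [riemannSum_base g z hπ (by omega)]
      simp only [sub_self, norm_zero]
      positivity
    · push_neg at hN2
      set n2 := N - 2 with hn2
      have hn2pos : 0 < n2 := by omega
      -- interior increments
      set a : ℕ → ℝ := fun k => ‖g (π.getD (k+1) 0) - g (π.getD k 0)‖ with ha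
      set b : ℕ → ℝ := fun k => ‖z (π.getD (k+2) 0) - z (π.getD (k+1) 0)‖ with hb
      have hA : ∑ k ∈ Finset.range n2, a k ^ p1 ≤ K1 := by
        refine le_trans ?_ (hgv π hπ)
        rw [varSum_eq]
        refine Finset.sum_le_sum_of_subset_of_nonneg ?_ ?_
        · intro k hk
          rw [Finset.mem_range] at hk ⊢
          omega
        · intro k _ _
          exact Real.rpow_nonneg (norm_nonneg _) _
      have hB : ∑ k ∈ Finset.range n2, b k ^ p2 ≤ K2 := by
        refine le_trans ?_ (hzv π hπ)
        rw [varSum_eq]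
        have : ∑ k ∈ Finset.range n2, b k ^ p2
            = ∑ j ∈ Finset.Ico 1 (n2+1), ‖z (π.getD (j+1) 0) - z (π.getD j 0)‖ ^ p2 := by
          rw [Finset.sum_Ico_eq_sum_range]
          refine Finset.sum_congr (by norm_num) ?_
          intro k _
          simp only [hb]
          rw [show 1+k+1 = k+2 from by omega, show 1+k = k+1 from by omega]
        rw [this]
        refine Finset.sum_le_sum_of_subset_of_nonneg ?_ ?_
        · intro j hj
          rw [Finset.mem_Ico] at hj
          rw [Finset.mem_range]
          omega
        · intro k _ _
          exact Real.rpow_nonneg (norm_nonneg _) _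
      -- pigeonhole
      have hsum1 : ∑ k ∈ Finset.range n2, (a k * b k / D) ^ θ ≤ 1 := by
        have hptw : ∀ k ∈ Finset.range n2, (a k * b k / D) ^ θ
            ≤ (θ/p1) * (a k ^ p1 / K1) + (θ/p2) * (b k ^ p2 / K2) := by
          intro k _
          have ha0 : (0:ℝ) ≤ a k := norm_nonneg _
          have hb0 : (0:ℝ) ≤ b k := norm_nonneg _
          have key : (a k * b k / D) ^ θ
              = (a k ^ p1 / K1) ^ (θ/p1) * (b k ^ p2 / K2) ^ (θ/p2) := by
            have e1 : a k * b k / D = (a k / K1 ^ (1/p1)) * (b k / K2 ^ (1/p2)) := by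
              rw [hDdef]; field_simp; try ring
            have hK1p : (0:ℝ) < K1 ^ (1/p1) := Real.rpow_pos_of_pos hK1 _
            have hK2p : (0:ℝ) < K2 ^ (1/p2) := Real.rpow_pos_of_pos hK2 _
            rw [e1, Real.mul_rpow (by positivity) (by positivity),
              div_rpow_aux (a k) K1 p1 θ ha0 hK1 hp1,
              div_rpow_aux (b k) K2 p2 θ hb0 hK2 hp2]
          rw [key]
          exact Real.geom_mean_le_arith_mean2_weighted
            (by positivity) (by positivity) (by positivity) (by positivity) hw
        calc ∑ k ∈ Finset.range n2, (a k * b k / D) ^ θ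
            ≤ ∑ k ∈ Finset.range n2, ((θ/p1) * (a k ^ p1 / K1) + (θ/p2) * (b k ^ p2 / K2)) :=
              Finset.sum_le_sum hptw
          _ = (θ/p1) * ((∑ k ∈ Finset.range n2, a k ^ p1) / K1)
              + (θ/p2) * ((∑ k ∈ Finset.range n2, b k ^ p2) / K2) := by
              rw [Finset.sum_add_distrib, ← Finset.mul_sum, ← Finset.mul_sum,
                ← Finset.sum_div, ← Finset.sum_div]
          _ ≤ (θ/p1) * 1 + (θ/p2) * 1 := by
              gcongr
              · exact (div_le_one hK1).2 hA
              · exact (div_le_one hK2).2 hB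
          _ = 1 := by rw [mul_one, mul_one, hw]
      have hexists : ∃ k ∈ Finset.range n2, (a k * b k / D) ^ θ ≤ 1 / (n2:ℝ) := by
        apply Finset.exists_le_of_sum_le
          (Finset.nonempty_range_iff.2 (by omega) : (Finset.range n2).Nonempty)
        rw [Finset.sum_const, Finset.card_range, nsmul_eq_mul]
        rw [mul_one_div, div_self (by positivity : (n2:ℝ) ≠ 0)]
        exact hsum1
      obtain ⟨k, hkmem, hk⟩ := hexists
      rw [Finset.mem_range] at hkmem
      have hab : a k * b k ≤ D * ((n2:ℝ)) ^ (-s) := by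
        have h1 : ((a k * b k / D) ^ θ) ^ s ≤ (1 / (n2:ℝ)) ^ s := by
          apply Real.rpow_le_rpow (Real.rpow_nonneg (by positivity) _) hk hs0.le
        rw [← Real.rpow_mul (by positivity), hθ1, Real.rpow_one] at h1
        have h2 : (1 / (n2:ℝ)) ^ s = ((n2:ℝ)) ^ (-s) := by
          rw [one_div, ← Real.rpow_neg_one, ← Real.rpow_mul (by positivity)]
          rw [neg_one_mul]
        rw [h2] at h1
        calc a k * b k = (a k * b k / D) * D := by field_simp
          _ ≤ ((n2:ℝ)) ^ (-s) * D := by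
              apply mul_le_mul_of_nonneg_right h1 hD0.le
          _ = D * ((n2:ℝ)) ^ (-s) := mul_comm _ _
      -- remove the point k+1
      set i := k + 1 with hi
      set π' := π.eraseIdx i with hπ'
      have hπ'd : IsDissection 0 t π' := hπ.eraseIdx (by omega) (by omega)
      have hπ'len : π'.length = N - 1 := by
        rw [hπ', List.length_eraseIdx]
        simp only [if_pos (by omega : i < π.length)]
        omega
      have hIH := IH (N-1) (by omega) π' hπ'len hπ'd
      have hdiff := riemannSum_eraseIdx g z π (by omega : 1 ≤ i) (by omega : i < π.length - 1)
      have hdiffnorm : ‖riemannSum g z π - riemannSum g z π'‖ ≤ D * ((n2:ℝ)) ^ (-s) := by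
        rw [hdiff]
        calc ‖(g (π.getD i 0) - g (π.getD (i-1) 0)) (z (π.getD (i+1) 0) - z (π.getD i 0))‖
            ≤ ‖g (π.getD i 0) - g (π.getD (i-1) 0)‖ * ‖z (π.getD (i+1) 0) - z (π.getD i 0)‖ :=
              ContinuousLinearMap.le_opNorm _ _
          _ = a k * b k := by
              simp only [ha, hb, hi]
              congr 3 <;> omega
          _ ≤ D * ((n2:ℝ)) ^ (-s) := hab
      calc ‖riemannSum g z π - g 0 (z t - z 0)‖
          ≤ ‖riemannSum g z π - riemannSum g z π'‖ + ‖riemannSum g z π' - g 0 (z t - z 0)‖ := by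
            have := norm_sub_le_norm_sub_add_norm_sub (riemannSum g z π) (riemannSum g z π')
              (g 0 (z t - z 0))
            exact this
        _ ≤ D * ((n2:ℝ)) ^ (-s)
            + (∑ j ∈ Finset.range (N-1-2), ((j:ℝ)+1) ^ (-s)) * D := by
            gcongr
        _ = (∑ j ∈ Finset.range (N-2), ((j:ℝ)+1) ^ (-s)) * D := by
            have hstep : N - 2 = (N - 1 - 2) + 1 := by omega
            rw [hstep, Finset.sum_range_succ, add_mul]
            have hcast : ((N - 1 - 2 : ℕ):ℝ) + 1 = (n2:ℝ) := by
              rw [hn2, show N - 1 - 2 = N - 3 from by omega,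
                show N - 2 = N - 3 + 1 from by omega]
              push_cast
              ring
            rw [hcast]
            ring

end chunk5
section chunk6

/-- The Young constant. -/
def youngC (s : ℝ) : ℝ := ∑' j : ℕ, ((j:ℝ)+1) ^ (-s)

lemma youngC_summable {s : ℝ} (hs : 1 < s) : Summable (fun j : ℕ => ((j:ℝ)+1) ^ (-s)) := by
  have h1 : Summable (fun n : ℕ => (n:ℝ) ^ (-s)) := Real.summable_nat_rpow.2 (by linarith)
  have h2 := (summable_nat_add_iff 1).2 h1
  refine h2.congr ?_
  intro j
  push_cast
  ring_nf

lemma youngC_nonneg {s : ℝ} : 0 ≤ youngC s := by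
  apply tsum_nonneg
  intro j
  exact Real.rpow_nonneg (by positivity) _

lemma youngC_partial_le {s : ℝ} (hs : 1 < s) (m : ℕ) :
    ∑ j ∈ Finset.range m, ((j:ℝ)+1) ^ (-s) ≤ youngC s := by
  exact (youngC_summable hs).sum_le_tsum _ (fun i _ => Real.rpow_nonneg (by positivity) _)

variable {d e : ℕ}

lemma young_maximal (p1 p2 : ℝ) (hp1 : 0 < p1) (hp2 : 0 < p2)
    (hs : 1 < 1/p1 + 1/p2)
    (g : ℝ → (EuclideanSpace ℝ (Fin d) →L[ℝ] EuclideanSpace ℝ (Fin e)))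
    (z : ℝ → EuclideanSpace ℝ (Fin d)) (t : ℝ) (K1 K2 : ℝ) (hK1 : 0 < K1) (hK2 : 0 < K2)
    (hgv : ∀ σ, IsDissection 0 t σ → varSum p1 g σ ≤ K1)
    (hzv : ∀ σ, IsDissection 0 t σ → varSum p2 z σ ≤ K2)
    (π : List ℝ) (hπ : IsDissection 0 t π) :
    ‖riemannSum g z π - g 0 (z t - z 0)‖
      ≤ youngC (1/p1 + 1/p2) * (K1 ^ (1/p1) * K2 ^ (1/p2)) := by
  refine le_trans (young_discrete p1 p2 hp1 hp2 hs g z t K1 K2 hK1 hK2 hgv hzv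
    π.length π rfl hπ) ?_
  apply mul_le_mul_of_nonneg_right (youngC_partial_le hs _) (by positivity)

lemma foldr_max_le (c : ℝ) (hc : 0 ≤ c) :
    ∀ L : List ℝ, (∀ x ∈ L, x ≤ c) → L.foldr max 0 ≤ c := by
  intro L
  induction L with
  | nil => intro _; simpa using hc
  | cons x L ih =>
    intro hmem
    simp only [List.foldr_cons]
    exact max_le (hmem x (by simp)) (ih fun y hy => hmem y (by simp [hy]))

lemma mesh_le {c : ℝ} (hc : 0 ≤ c) (π : List ℝ)
    (h : ∀ i : ℕ, i + 1 < π.length → π.getD (i+1) 0 - π.getD i 0 ≤ c) :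
    mesh π ≤ c := by
  apply foldr_max_le c hc
  intro x hx
  obtain ⟨i, hi, rfl⟩ := List.mem_iff_getElem.1 hx
  rw [List.getElem_map]
  have hlen : i < (π.zip π.tail).length := by simpa using hi
  have hlen2 : (π.zip π.tail).length = min π.length (π.length - 1) := by
    simp [List.length_zip]
  have hi2 : i + 1 < π.length := by
    rw [hlen2] at hlen; omega
  rw [List.getElem_zip]
  have := h i hi2
  rw [List.getD_eq_getElem _ _ hi2, List.getD_eq_getElem _ _ (by omega)] at this
  simpa [List.getElem_tail] using this

lemma exists_dissection_small_mesh (t δ : ℝ) (ht : 0 ≤ t) (hδ : 0 < δ) :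
    ∃ π, IsDissection 0 t π ∧ mesh π < δ := by
  rcases eq_or_lt_of_le ht with rfl | htpos
  · refine ⟨[0], ⟨?_, rfl, rfl⟩, ?_⟩
    · simp [List.Chain']
    · show mesh [0] < δ
      simp [mesh, hδ]
  · set N : ℕ := ⌈t/δ⌉₊ + 1 with hN
    have hN0 : 0 < N := by omega
    set h : ℝ := t / N with hh
    have hh0 : 0 < h := by positivity
    have hhδ : h < δ := by
      rw [hh, div_lt_iff₀ (by positivity)]
      have h1 : t/δ < N := by
        rw [hN]
        push_cast
        exact lt_of_le_of_lt (Nat.le_ceil _) (by linarith)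
      calc t = (t/δ) * δ := by field_simp
        _ < N * δ := by
            apply mul_lt_mul_of_pos_right h1 hδ
        _ = δ * N := mul_comm _ _
    set f : ℕ → ℝ := fun k => (k:ℝ) * h with hf
    set π : List ℝ := (List.range (N+1)).map f with hπ
    have hlen : π.length = N + 1 := by simp [hπ]
    have hget : ∀ i : ℕ, i < N + 1 → π.getD i 0 = (i:ℝ) * h := by
      intro i hi
      rw [List.getD_eq_getElem _ _ (by omega)]
      simp [hπ, hf]
    have hd : IsDissection 0 t π := by
      refine ⟨?_, ?_, ?_⟩
      · simp only [List.Chain']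
        rw [List.isChain_iff_pairwise, List.pairwise_iff_get]
        intro i j hij
        have hi' : (i:ℕ) < N + 1 := by rw [← hlen]; exact i.isLt
        have hj' : (j:ℕ) < N + 1 := by rw [← hlen]; exact j.isLt
        simp only [List.get_eq_getElem]
        rw [← List.getD_eq_getElem π 0, ← List.getD_eq_getElem π 0,
          hget i hi', hget j hj']
        have hcast : ((i:ℕ):ℝ) < ((j:ℕ):ℝ) := by exact_mod_cast hij
        exact mul_lt_mul_of_pos_right hcast hh0
      · have hne : π ≠ [] := by
          intro hcon
          rw [hcon] at hlen
          simp at hlen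
        rw [List.head?_eq_head hne, List.head_eq_getElem,
          ← List.getD_eq_getElem _ 0, hget 0 (by omega)]
        simp
      · have hne : π ≠ [] := by
          intro hcon
          rw [hcon] at hlen
          simp at hlen
        rw [List.getLast?_eq_getLast hne, List.getLast_eq_getElem,
          ← List.getD_eq_getElem _ 0, hlen]
        have : N + 1 - 1 = N := rfl
        rw [this, hget N (by omega)]
        rw [hh]
        field_simp
    refine ⟨π, hd, lt_of_le_of_lt (mesh_le hh0.le π ?_) hhδ⟩
    intro i hi
    rw [hlen] at hi
    rw [hget (i+1) (by omega), hget i (by omega)]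
    push_cast
    ring_nf
    exact le_rfl

end chunk6
section chunk7

lemma pVar_nonneg (p : ℝ) {E : Type*} [NormedAddCommGroup E] (x : ℝ → E)
    {T : ℝ} (hT : 0 ≤ T) (hfin : HasFiniteVar p x 0 T) : 0 ≤ pVar p x 0 T := by
  rcases eq_or_lt_of_le hT with rfl | hT
  · have hd : IsDissection 0 0 [0] := ⟨by simp [List.Chain'], rfl, rfl⟩
    have hmem : varSum p x [0] ^ (1/p) ∈
        {v | ∃ π, IsDissection 0 0 π ∧ v = varSum p x π ^ (1 / p)} := ⟨_, hd, rfl⟩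
    refine le_trans ?_ (le_csSup hfin hmem)
    have : 0 ≤ varSum p x [0] := by
      rw [varSum_eq]
      exact Finset.sum_nonneg fun i _ => Real.rpow_nonneg (norm_nonneg _) _
    positivity
  · have hd : IsDissection 0 T [0, T] := ⟨by simp [List.Chain', hT], rfl, rfl⟩
    have hmem : varSum p x [0, T] ^ (1/p) ∈
        {v | ∃ π, IsDissection 0 T π ∧ v = varSum p x π ^ (1 / p)} := ⟨_, hd, rfl⟩
    refine le_trans ?_ (le_csSup hfin hmem)
    have : 0 ≤ varSum p x [0, T] := by
      rw [varSum_eq]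
      exact Finset.sum_nonneg fun i _ => Real.rpow_nonneg (norm_nonneg _) _
    positivity

lemma varSum_pair (p : ℝ) {E : Type*} [NormedAddCommGroup E] (x : ℝ → E) (a b : ℝ) :
    varSum p x [a, b] = ‖x b - x a‖ ^ p := by
  rw [varSum_eq]
  norm_num

/-- triangle-type bound for the `r`-variation sum of a difference. -/
lemma varSum_sub_le {d e : ℕ} (r : ℝ) (hr : 0 < r)
    (y1 y2 : ℝ → (EuclideanSpace ℝ (Fin d) →L[ℝ] EuclideanSpace ℝ (Fin e)))
    (σ : List ℝ) :
    varSum r (fun s => y1 s - y2 s) σ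
      ≤ (2:ℝ) ^ r * (varSum r y1 σ + varSum r y2 σ) := by
  simp only [varSum_eq]
  rw [mul_add, Finset.mul_sum, Finset.mul_sum, ← Finset.sum_add_distrib]
  refine Finset.sum_le_sum ?_
  intro i _
  set u := ‖y1 (σ.getD (i+1) 0) - y1 (σ.getD i 0)‖ with hu
  set v := ‖y2 (σ.getD (i+1) 0) - y2 (σ.getD i 0)‖ with hv
  have hu0 : 0 ≤ u := norm_nonneg _
  have hv0 : 0 ≤ v := norm_nonneg _
  have h1 : ‖(y1 (σ.getD (i+1) 0) - y2 (σ.getD (i+1) 0)) - (y1 (σ.getD i 0) - y2 (σ.getD i 0))‖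
      ≤ u + v := by
    rw [hu, hv]
    have : (y1 (σ.getD (i+1) 0) - y2 (σ.getD (i+1) 0)) - (y1 (σ.getD i 0) - y2 (σ.getD i 0))
        = (y1 (σ.getD (i+1) 0) - y1 (σ.getD i 0)) - (y2 (σ.getD (i+1) 0) - y2 (σ.getD i 0)) := by
      abel
    rw [this]
    exact norm_sub_le _ _
  calc ‖(y1 (σ.getD (i+1) 0) - y2 (σ.getD (i+1) 0)) - (y1 (σ.getD i 0) - y2 (σ.getD i 0))‖ ^ r
      ≤ (u + v) ^ r := Real.rpow_le_rpow (norm_nonneg _) h1 hr.le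
    _ ≤ (2 * max u v) ^ r := by
        apply Real.rpow_le_rpow (by positivity) ?_ hr.le
        rcases max_cases u v with ⟨hm, _⟩ | ⟨hm, hle⟩ <;> rw [hm] <;> [linarith [le_max_right u v, le_max_left u v]; linarith]
    _ = (2:ℝ) ^ r * (max u v) ^ r := Real.mul_rpow (by norm_num) (by positivity)
    _ ≤ (2:ℝ) ^ r * (u ^ r + v ^ r) := by
        apply mul_le_mul_of_nonneg_left ?_ (by positivity)
        rcases max_cases u v with ⟨hm, _⟩ | ⟨hm, _⟩ <;> rw [hm]
        · have : (0:ℝ) ≤ v ^ r := Real.rpow_nonneg hv0 _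
          linarith
        · have : (0:ℝ) ≤ u ^ r := Real.rpow_nonneg hu0 _
          linarith
    _ = (2:ℝ) ^ r * u ^ r + (2:ℝ) ^ r * v ^ r := by ring

/-- interpolation: bound the `r'`-variation sum by sup-norm and `r`-variation sum. -/
lemma varSum_interp {d e : ℕ} (r r' : ℝ) (hr : 0 < r) (hrr' : r < r')
    (g : ℝ → (EuclideanSpace ℝ (Fin d) →L[ℝ] EuclideanSpace ℝ (Fin e)))
    {T t : ℝ} (htT : t ≤ T)
    {ε0 : ℝ} (hε0 : 0 < ε0) (hg : ∀ x ∈ Set.Icc (0:ℝ) T, ‖g x‖ ≤ ε0)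
    {σ : List ℝ} (hσ : IsDissection 0 t σ) :
    varSum r' g σ ≤ (2*ε0) ^ (r'-r) * varSum r g σ := by
  simp only [varSum_eq]
  rw [Finset.mul_sum]
  refine Finset.sum_le_sum ?_
  intro i hi
  rw [Finset.mem_range] at hi
  set w := ‖g (σ.getD (i+1) 0) - g (σ.getD i 0)‖ with hw
  have hw0 : 0 ≤ w := norm_nonneg _
  have hwle : w ≤ 2 * ε0 := by
    have hb1 := hσ.mem_bounds (i := i+1) (by omega)
    have hb2 := hσ.mem_bounds (i := i) (by omega)
    have h1 : ‖g (σ.getD (i+1) 0)‖ ≤ ε0 :=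
      hg _ ⟨hb1.1, le_trans hb1.2 htT⟩
    have h2 : ‖g (σ.getD i 0)‖ ≤ ε0 :=
      hg _ ⟨hb2.1, le_trans hb2.2 htT⟩
    calc w ≤ ‖g (σ.getD (i+1) 0)‖ + ‖g (σ.getD i 0)‖ := norm_sub_le _ _
      _ ≤ 2 * ε0 := by linarith
  rcases eq_or_lt_of_le hw0 with hw0' | hwpos
  · rw [← hw0', Real.zero_rpow (by linarith : r' ≠ 0),
      Real.zero_rpow (by linarith : r ≠ 0), mul_zero]
  · have : w ^ r' = w ^ (r' - r) * w ^ r := by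
      rw [← Real.rpow_add hwpos]
      congr 1
      ring
    rw [this]
    apply mul_le_mul_of_nonneg_right ?_ (Real.rpow_nonneg hw0 _)
    exact Real.rpow_le_rpow hw0 hwle (by linarith)

/-- bound on a single increment of `z`. -/
lemma norm_incr_le (q : ℝ) (hq : 1 ≤ q) {d : ℕ} (z : ℝ → EuclideanSpace ℝ (Fin d))
    {T : ℝ} (hfin : HasFiniteVar q z 0 T) {t : ℝ} (ht : t ∈ Set.Icc (0:ℝ) T) :
    ‖z t - z 0‖ ≤ (pVar q z 0 T ^ q + 1) ^ (1/q) := by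
  have hq0 : 0 < q := by linarith
  have hT0 : 0 ≤ T := le_trans ht.1 ht.2
  have hPz : 0 ≤ pVar q z 0 T ^ q + 1 := by
    have := pVar_nonneg q z hT0 hfin
    positivity
  rcases eq_or_lt_of_le ht.1 with rfl | htpos
  · simp only [sub_self, norm_zero]
    positivity
  · have hd : IsDissection 0 t [0, t] := ⟨by simp [List.Chain', htpos], rfl, rfl⟩
    have h1 : varSum q z [0, t] ≤ pVar q z 0 T ^ q :=
      varSum_le_pVar q hq z ht.2 hfin hd
    rw [varSum_pair] at h1
    have h2 : ‖z t - z 0‖ ^ q ≤ pVar q z 0 T ^ q + 1 := by linarith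
    calc ‖z t - z 0‖ = (‖z t - z 0‖ ^ q) ^ (1/q) := by
          rw [← Real.rpow_mul (norm_nonneg _), mul_one_div, div_self hq0.ne', Real.rpow_one]
      _ ≤ (pVar q z 0 T ^ q + 1) ^ (1/q) :=
          Real.rpow_le_rpow (Real.rpow_nonneg (norm_nonneg _) _) h2 (by positivity)

end chunk7
theorem young_integral_uniform_convergence
    (d e : ℕ) (T q r : ℝ) (hT : 0 < T) (hq : 1 ≤ q) (hr : 1 ≤ r)
    (hqr : 1 < 1 / q + 1 / r)
    (z : ℝ → EuclideanSpace ℝ (Fin d))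
    (hz : ContinuousOn z (Set.Icc 0 T)) (hzfin : HasFiniteVar q z 0 T)
    (y : ℝ → (EuclideanSpace ℝ (Fin d) →L[ℝ] EuclideanSpace ℝ (Fin e)))
    (hy : ContinuousOn y (Set.Icc 0 T)) (hyfin : HasFiniteVar r y 0 T)
    (yn : ℕ → ℝ → (EuclideanSpace ℝ (Fin d) →L[ℝ] EuclideanSpace ℝ (Fin e)))
    (hyn : ∀ n, ContinuousOn (yn n) (Set.Icc 0 T))
    (hynfin : ∀ n, HasFiniteVar r (yn n) 0 T)
    (hunif : TendstoUniformlyOn yn y atTop (Set.Icc 0 T))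
    (hbdd : BddAbove (Set.range fun n => pVar r (yn n) 0 T))
    (In : ℕ → ℝ → EuclideanSpace ℝ (Fin e))
    (I : ℝ → EuclideanSpace ℝ (Fin e))
    (hIn : ∀ n, ∀ t ∈ Set.Icc (0 : ℝ) T, IsYoungIntegral (yn n) z t (In n t))
    (hI : ∀ t ∈ Set.Icc (0 : ℝ) T, IsYoungIntegral y z t (I t)) :
    Tendsto (fun n => ⨆ t : Set.Icc (0 : ℝ) T, ‖In n t - I t‖) atTop (nhds 0) := by
  have hq0 : 0 < q := by linarith
  have hr0 : 0 < r := by linarith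
  -- choice of r' with r < r', 1 < 1/r' + 1/q
  set s0 : ℝ := 1/q + 1/r - 1 with hs0def
  have hs0 : 0 < s0 := by simp only [hs0def]; linarith
  have h1q : 1/q ≤ 1 := by rw [div_le_one hq0]; exact hq
  have hr0' : 0 < 1/r := by positivity
  set ir' : ℝ := 1/r - s0/2 with hir'def
  have hir'pos : 0 < ir' := by simp only [hir'def, hs0def]; linarith
  set r' : ℝ := 1/ir' with hr'def
  have hr'pos : 0 < r' := by positivity
  have hinv : 1/r' = ir' := by rw [hr'def, one_div_one_div]
  have hrr' : r < r' := by
    have h2 : ir' < 1/r := by simp only [hir'def]; linarith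
    calc r = 1/(1/r) := by field_simp
      _ < 1/ir' := one_div_lt_one_div_of_lt hir'pos h2
  have hs1 : 1 < 1/r' + 1/q := by
    rw [hinv]; simp only [hir'def, hs0def]; linarith
  -- variation bounds
  obtain ⟨Mb, hMb⟩ := hbdd
  have hMb' : ∀ n, pVar r (yn n) 0 T ≤ Mb := fun n => hMb ⟨n, rfl⟩
  set My : ℝ := pVar r y 0 T with hMydef
  have hMy0 : 0 ≤ My := pVar_nonneg r y hT.le hyfin
  set Mb2 : ℝ := max Mb 0 with hMb2def
  have hMb20 : 0 ≤ Mb2 := le_max_right _ _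
  set MM : ℝ := 2^r * (Mb2 ^ r + My ^ r) + 1 with hMMdef
  have h2r : (0:ℝ) < 2^r := Real.rpow_pos_of_pos (by norm_num) _
  have hMb2r : (0:ℝ) ≤ Mb2 ^ r := Real.rpow_nonneg hMb20 _
  have hMyr : (0:ℝ) ≤ My ^ r := Real.rpow_nonneg hMy0 _
  have hMM0 : 0 < MM := by
    have : (0:ℝ) ≤ 2^r * (Mb2 ^ r + My ^ r) := by positivity
    simp only [hMMdef]; linarith
  set K2 : ℝ := pVar q z 0 T ^ q + 1 with hK2def
  have hPz0 : 0 ≤ pVar q z 0 T := pVar_nonneg q z hT.le hzfin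
  have hK20 : 0 < K2 := by
    have : (0:ℝ) ≤ pVar q z 0 T ^ q := Real.rpow_nonneg hPz0 _
    simp only [hK2def]; linarith
  set Zb : ℝ := K2 ^ (1/q) with hZbdef
  have hZb0 : 0 ≤ Zb := Real.rpow_nonneg hK20.le _
  -- r-variation bound for the difference
  have hgvar : ∀ n, ∀ t ∈ Set.Icc (0:ℝ) T, ∀ σ, IsDissection 0 t σ →
      varSum r (fun x => yn n x - y x) σ ≤ MM - 1 := by
    intro n t ht σ hσ
    have h1 := varSum_sub_le r hr0 (yn n) y σ
    have h2 : varSum r (yn n) σ ≤ Mb2 ^ r := by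
      refine le_trans (varSum_le_pVar r hr (yn n) ht.2 (hynfin n) hσ) ?_
      exact Real.rpow_le_rpow (pVar_nonneg r (yn n) hT.le (hynfin n))
        (le_trans (hMb' n) (le_max_left _ _)) hr0.le
    have h3 : varSum r y σ ≤ My ^ r := varSum_le_pVar r hr y ht.2 hyfin hσ
    have hMM' : MM - 1 = 2^r*(Mb2^r + My^r) := by simp only [hMMdef]; ring
    rw [hMM']
    refine le_trans h1 ?_
    exact mul_le_mul_of_nonneg_left (by linarith) h2r.le
  -- the main estimate
  have claim : ∀ ε0 : ℝ, 0 < ε0 → ∀ n, (∀ x ∈ Set.Icc (0:ℝ) T, ‖yn n x - y x‖ ≤ ε0) →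
      ∀ t ∈ Set.Icc (0:ℝ) T, ‖In n t - I t‖
        ≤ ε0 * Zb + youngC (1/r' + 1/q) * (((2*ε0)^(r'-r) * MM) ^ (1/r') * Zb) := by
    intro ε0 hε0 n hbnd t ht
    set g : ℝ → (EuclideanSpace ℝ (Fin d) →L[ℝ] EuclideanSpace ℝ (Fin e)) :=
      fun x => yn n x - y x with hgdef
    set K1 : ℝ := (2*ε0)^(r'-r) * MM with hK1def
    have hK10 : 0 < K1 := by
      have : (0:ℝ) < (2*ε0)^(r'-r) := Real.rpow_pos_of_pos (by linarith) _
      simp only [hK1def]; positivity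
    have hK1v : ∀ σ, IsDissection 0 t σ → varSum r' g σ ≤ K1 := by
      intro σ hσ
      refine le_trans (varSum_interp r r' hr0 hrr' g ht.2 hε0 hbnd hσ) ?_
      simp only [hK1def]
      refine mul_le_mul_of_nonneg_left ?_ (Real.rpow_nonneg (by linarith) _)
      have := hgvar n t ht σ hσ
      simp only [hgdef] at this ⊢
      linarith
    have hK2v : ∀ σ, IsDissection 0 t σ → varSum q z σ ≤ K2 := by
      intro σ hσ
      have := varSum_le_pVar q hq z ht.2 hzfin hσ
      simp only [hK2def]; linarith
    refine le_of_forall_pos_le_add ?_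
    intro ε' hε'
    obtain ⟨δ1, hδ1, h1⟩ := hIn n t ht (ε'/2) (by linarith)
    obtain ⟨δ2, hδ2, h2⟩ := hI t ht (ε'/2) (by linarith)
    obtain ⟨π, hπ, hmesh⟩ := exists_dissection_small_mesh t (min δ1 δ2) ht.1 (by positivity)
    have hb1 := h1 π hπ (lt_of_lt_of_le hmesh (min_le_left _ _))
    have hb2 := h2 π hπ (lt_of_lt_of_le hmesh (min_le_right _ _))
    have hRS : riemannSum (yn n) z π - riemannSum y z π = riemannSum g z π :=
      (riemannSum_sub (yn n) y z π).symm
    have hym := young_maximal r' q hr'pos hq0 hs1 g z t K1 K2 hK10 hK20 hK1v hK2v π hπ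
    have hg0 : ‖g 0 (z t - z 0)‖ ≤ ε0 * Zb := by
      calc ‖g 0 (z t - z 0)‖ ≤ ‖g 0‖ * ‖z t - z 0‖ := ContinuousLinearMap.le_opNorm _ _
        _ ≤ ε0 * Zb := by
            refine mul_le_mul (hbnd 0 ⟨le_refl 0, hT.le⟩) ?_ (norm_nonneg _) hε0.le
            exact norm_incr_le q hq z hzfin ht
    have hmid : ‖riemannSum g z π‖
        ≤ ε0 * Zb + youngC (1/r' + 1/q) * (K1 ^ (1/r') * K2 ^ (1/q)) := by
      calc ‖riemannSum g z π‖
          = ‖(riemannSum g z π - g 0 (z t - z 0)) + g 0 (z t - z 0)‖ := by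
            congr 1
            abel
        _ ≤ ‖riemannSum g z π - g 0 (z t - z 0)‖ + ‖g 0 (z t - z 0)‖ := norm_add_le _ _
        _ ≤ youngC (1/r' + 1/q) * (K1 ^ (1/r') * K2 ^ (1/q)) + ε0 * Zb := by gcongr
        _ = ε0 * Zb + youngC (1/r' + 1/q) * (K1 ^ (1/r') * K2 ^ (1/q)) := by ring
    have hdecomp : In n t - I t = -(riemannSum (yn n) z π - In n t) + riemannSum g z π
        + (riemannSum y z π - I t) := by
      rw [← hRS]; abel
    calc ‖In n t - I t‖
        ≤ ‖riemannSum (yn n) z π - In n t‖ + ‖riemannSum g z π‖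
          + ‖riemannSum y z π - I t‖ := by
          rw [hdecomp]
          refine le_trans (norm_add₃_le) ?_
          rw [norm_neg]
      _ ≤ ε'/2 + (ε0 * Zb + youngC (1/r' + 1/q) * (K1 ^ (1/r') * K2 ^ (1/q))) + ε'/2 := by
          exact add_le_add (add_le_add hb1.le hmid) hb2.le
      _ = ε0 * Zb + youngC (1/r' + 1/q) * (K1 ^ (1/r') * K2 ^ (1/q)) + ε' := by ring
  -- conclude via continuity at 0
  rw [Metric.tendsto_atTop]
  intro ε hε
  set Φ : ℝ → ℝ := fun x => x * Zb
    + youngC (1/r' + 1/q) * (((2*x)^(r'-r) * MM) ^ (1/r') * Zb) with hΦdef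
  have hΦ0 : Φ 0 = 0 := by
    show (0:ℝ) * Zb + youngC (1/r' + 1/q) * (((2*(0:ℝ))^(r'-r) * MM) ^ (1/r') * Zb) = 0
    rw [show (2*(0:ℝ)) = 0 from by ring,
      Real.zero_rpow (by linarith : r' - r ≠ 0), zero_mul, zero_mul,
      Real.zero_rpow (by positivity : (1:ℝ)/r' ≠ 0)]
    ring
  have hcont : ContinuousAt Φ 0 := by
    apply ContinuousAt.add
    · exact (continuous_id.mul continuous_const).continuousAt
    · apply ContinuousAt.mul continuousAt_const
      apply ContinuousAt.mul ?_ continuousAt_const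
      have c1 : ContinuousAt (fun x : ℝ => 2*x) 0 :=
        (continuous_const.mul continuous_id).continuousAt
      have c2 : ContinuousAt (fun u : ℝ => u ^ (r'-r)) ((fun x : ℝ => 2*x) 0) := by
        simp only [mul_zero]
        exact Real.continuousAt_rpow_const 0 _ (Or.inr (by linarith))
      have c3 : ContinuousAt (fun x : ℝ => (2*x)^(r'-r)) 0 := c2.comp c1
      have c4 : ContinuousAt (fun x : ℝ => (2*x)^(r'-r) * MM) 0 := c3.mul continuousAt_const
      have c5 : ContinuousAt (fun u : ℝ => u ^ ((1:ℝ)/r'))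
          ((fun x : ℝ => (2*x)^(r'-r) * MM) 0) :=
        Real.continuousAt_rpow_const _ _ (Or.inr (by positivity))
      have c6 : ContinuousAt ((fun u : ℝ => u ^ ((1:ℝ)/r')) ∘ (fun x : ℝ => (2*x)^(r'-r) * MM)) 0 :=
        ContinuousAt.comp c5 c4
      exact c6
  obtain ⟨δ0, hδ0, hδ0'⟩ := Metric.continuousAt_iff.1 hcont (ε/2) (by linarith)
  set ε0 : ℝ := δ0/2 with hε0def
  have hε00 : 0 < ε0 := by positivity
  have hΦε0 : Φ ε0 < ε/2 := by
    have hd : dist ε0 0 < δ0 := by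
      rw [Real.dist_eq, sub_zero, abs_of_pos hε00]
      simp only [hε0def]; linarith
    have := hδ0' hd
    rw [hΦ0, Real.dist_eq, sub_zero] at this
    exact lt_of_le_of_lt (le_abs_self _) this
  obtain ⟨N0, hN0⟩ := eventually_atTop.1 ((Metric.tendstoUniformlyOn_iff.1 hunif) ε0 hε00)
  refine ⟨N0, ?_⟩
  intro n hn
  have hbnd : ∀ x ∈ Set.Icc (0:ℝ) T, ‖yn n x - y x‖ ≤ ε0 := by
    intro x hx
    have := hN0 n hn x hx
    rw [dist_comm, dist_eq_norm] at this
    exact this.le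
  haveI : Nonempty (Set.Icc (0:ℝ) T) := Set.Nonempty.to_subtype (Set.nonempty_Icc.2 hT.le)
  have hsup_le : (⨆ t : Set.Icc (0:ℝ) T, ‖In n t - I t‖) ≤ Φ ε0 := by
    apply ciSup_le
    intro t
    exact claim ε0 hε00 n hbnd t t.2
  have hsup_nonneg : 0 ≤ ⨆ t : Set.Icc (0:ℝ) T, ‖In n t - I t‖ :=
    Real.iSup_nonneg (fun t => norm_nonneg _)
  rw [Real.dist_eq, sub_zero, abs_of_nonneg hsup_nonneg]
  calc (⨆ t : Set.Icc (0:ℝ) T, ‖In n t - I t‖) ≤ Φ ε0 := hsup_le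
    _ < ε/2 := hΦε0
    _ < ε := by linarith
end
end
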